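/- arXiv:1510.05390 — 4 statements merged into one kernel-verified Lean document; each statement's English description precedes it below -/
import Mathlib

section
/- For any 0 < λ < n, the relative entropy from the binomial distribution Bin(n, λ/n) to the Poisson distribution with mean λ satisfies D(B_{n,λ/n} ‖ Π_λ) ≤ λ² / (n(n − λ)). -/
noncomputable section
open scoped BigOperators ENNReal
open Real

/-- Poisson mass function with mean `l`. -/
def poissonPmf (l : ℝ) : ℕ → ℝ := fun x => Real.exp (-l) * l ^ x / (Nat.factorial x)

/-- Mean of a mass function on ℕ. -/
def pmfMean (P : ℕ → ℝ) : ℝ := ∑' x : ℕ, (x : ℝ) * P x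

/-- Scaled score function. -/
def scaledScore (P : ℕ → ℝ) (x : ℕ) : ℝ :=
  ((x : ℝ) + 1) * P (x + 1) / (pmfMean P * P x) - 1

/-- Scaled Fisher information. -/
def scaledFisher (P : ℕ → ℝ) : ℝ := pmfMean P * ∑' x : ℕ, P x * (scaledScore P x) ^ 2

/-- Convolution of mass functions on ℕ. -/
def pmfConv (P Q : ℕ → ℝ) : ℕ → ℝ := fun x => ∑ y ∈ Finset.range (x + 1), P y * Q (x - y)

/-- Point mass at 0. -/
def delta0 : ℕ → ℝ := fun x => if x = 0 then 1 else 0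

/-- Convolution of a list of mass functions. -/
def convList (l : List (ℕ → ℝ)) : ℕ → ℝ := l.foldr pmfConv delta0

/-- n-fold convolution power. -/
def convPow (Q : ℕ → ℝ) : ℕ → (ℕ → ℝ)
  | 0 => delta0
  | n + 1 => pmfConv Q (convPow Q n)

/-- α-thinning of a mass function. -/
def thin (a : ℝ) (P : ℕ → ℝ) : ℕ → ℝ := fun x =>
  ∑' y : ℕ, (if x ≤ y then (y.choose x : ℝ) * a ^ x * (1 - a) ^ (y - x) * P y else 0)

/-- Relative entropy. -/
def relEnt (P Q : ℕ → ℝ) : ℝ := ∑' x : ℕ, P x * Real.log (P x / Q x)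

/-- Discrete (Shannon) entropy. -/
def pmfEntropy (P : ℕ → ℝ) : ℝ := -∑' x : ℕ, P x * Real.log (P x)

/-- Entropy functional Ent_P(f). -/
def entFunc (P f : ℕ → ℝ) : ℝ :=
  (∑' x : ℕ, P x * f x * Real.log (f x)) -
    (∑' x : ℕ, P x * f x) * Real.log (∑' x : ℕ, P x * f x)

/-- Variance of `g` under `P`. -/
def pmfVar (P g : ℕ → ℝ) : ℝ := ∑' x : ℕ, P x * (g x - ∑' y : ℕ, P y * g y) ^ 2

/-- Ultra-log-concavity: `x P(x)² ≥ (x+1) P(x+1) P(x-1)` for all `x ≥ 1`. -/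
def IsULC (P : ℕ → ℝ) : Prop :=
  ∀ x : ℕ, ((x : ℝ) + 2) * P (x + 2) * P x ≤ ((x : ℝ) + 1) * P (x + 1) ^ 2

/-- `P(x-1)` with the convention `P(-1) = 0`. -/
def pm1 (P : ℕ → ℝ) : ℕ → ℝ := fun x => if x = 0 then 0 else P (x - 1)

/-- Johnstone–MacGibbon Fisher information, valued in `ℝ≥0∞`. -/
def jmFisher (P : ℕ → ℝ) : ℝ≥0∞ :=
  ∑' x : ℕ, if P x = 0 ∧ pm1 P x ≠ 0 then ⊤
    else ENNReal.ofReal (P x * (pm1 P x / P x - 1) ^ 2)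

/-- c-log-concavity. -/
def CLogConcave (P : ℕ → ℝ) (c : ℝ) : Prop :=
  ∀ x : ℕ, c ≤ P x / P (x + 1) - pm1 P x / P x

/-- Binomial mass function. -/
def binomialPmf (n : ℕ) (p : ℝ) : ℕ → ℝ := fun x =>
  if x ≤ n then (n.choose x : ℝ) * p ^ x * (1 - p) ^ (n - x) else 0

/-- Bernoulli mass function. -/
def bernoulliPmf (p : ℝ) : ℕ → ℝ := fun x =>
  if x = 0 then 1 - p else if x = 1 then p else 0

lemma aux_sum_desc (m : ℕ) : ∀ x : ℕ, (m+1) * ∑ k ∈ Finset.range x, k.descFactorial m = x.descFactorial (m+1) := by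
  intro x
  induction x with
  | zero => simp
  | succ x ih =>
    rw [Finset.sum_range_succ, Nat.mul_add, ih, Nat.succ_descFactorial_succ, Nat.descFactorial_succ]
    rcases le_or_gt m x with h | h
    · have : x - m + (m+1) = x + 1 := by omega
      nlinarith [this]
    · have h0 : x.descFactorial m = 0 := Nat.descFactorial_eq_zero_iff_lt.mpr h
      simp [h0, Nat.descFactorial_eq_zero_iff_lt.mpr (by omega : x < m)]

lemma aux_desc_lower (n : ℕ) : ∀ m : ℕ, 2 * n^(m+1) ≤ 2 * n.descFactorial (m+1) + n^m * (m*(m+1)) := by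
  intro m
  induction m with
  | zero => simp [Nat.descFactorial]
  | succ m ih =>
    have h1 : n * n.descFactorial (m+1) ≤ n.descFactorial (m+2) + (m+1) * n.descFactorial (m+1) := by
      have hds : n.descFactorial (m+2) = (n - (m+1)) * n.descFactorial (m+1) := Nat.descFactorial_succ n (m+1)
      have h2 : n ≤ (n - (m+1)) + (m+1) := by omega
      calc n * n.descFactorial (m+1) ≤ ((n - (m+1)) + (m+1)) * n.descFactorial (m+1) :=
            Nat.mul_le_mul_right _ h2
        _ = n.descFactorial (m+2) + (m+1) * n.descFactorial (m+1) := by rw [hds]; ring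
    have h3 : n.descFactorial (m+1) ≤ n^(m+1) := Nat.descFactorial_le_pow n (m+1)
    calc 2 * n^(m+2) = n * (2 * n^(m+1)) := by ring
      _ ≤ n * (2 * n.descFactorial (m+1) + n^m * (m*(m+1))) := Nat.mul_le_mul_left n ih
      _ = 2 * (n * n.descFactorial (m+1)) + n^(m+1) * (m*(m+1)) := by ring
      _ ≤ 2 * (n.descFactorial (m+2) + (m+1) * n.descFactorial (m+1)) + n^(m+1) * (m*(m+1)) := by
          omega
      _ ≤ 2 * n.descFactorial (m+2) + 2 * (m+1) * n^(m+1) + n^(m+1) * (m*(m+1)) := by nlinarith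
      _ = 2 * n.descFactorial (m+2) + n^(m+1) * ((m+1)*(m+2)) := by ring

lemma aux_moment (p q : ℝ) (hpq : p + q = 1) (m : ℕ) : ∀ n : ℕ,
    ∑ x ∈ Finset.range (n+1), (x.descFactorial m : ℝ) * (n.choose x) * p^x * q^(n-x)
      = (n.descFactorial m : ℝ) * p^m := by
  induction m with
  | zero =>
    intro n
    simp only [Nat.descFactorial, Nat.cast_one, one_mul, pow_zero, mul_one]
    have := add_pow p q n
    rw [hpq, one_pow] at this
    rw [this]
    exact Finset.sum_congr rfl (fun x hx => by ring)
  | succ m ih =>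
    intro n
    rw [Finset.sum_range_succ']
    rw [Nat.zero_descFactorial_succ]
    cases n with
    | zero => simp
    | succ N =>
      have key : ∀ y ∈ Finset.range (N+1),
          ((y+1).descFactorial (m+1) : ℝ) * ((N+1).choose (y+1)) * p^(y+1) * q^(N+1-(y+1))
          = ((N:ℝ)+1) * p * ((y.descFactorial m : ℝ) * (N.choose y) * p^y * q^(N-y)) := by
        intro y hy
        have h1 : (y+1).descFactorial (m+1) = (y+1) * y.descFactorial m :=
          Nat.succ_descFactorial_succ y m
        have h2 : (N+1) * N.choose y = (N+1).choose (y+1) * (y+1) := Nat.add_one_mul_choose_eq N y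
        have h4 : N+1-(y+1) = N - y := by omega
        rw [h1, h4]
        push_cast
        have h3' : ((y:ℝ)+1) * ((N+1).choose (y+1) : ℝ) = ((N:ℝ)+1) * (N.choose y : ℝ) := by
          exact_mod_cast congrArg (fun z : ℕ => (z:ℝ)) (by rw [h2]; ring : (y+1) * ((N+1).choose (y+1)) = (N+1) * (N.choose y))
        calc ((y:ℝ)+1) * (y.descFactorial m : ℝ) * ((N+1).choose (y+1) : ℝ) * p^(y+1) * q^(N-y)
            = (((y:ℝ)+1) * ((N+1).choose (y+1) : ℝ)) * ((y.descFactorial m : ℝ) * p^(y+1) * q^(N-y)) := by ring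
          _ = (((N:ℝ)+1) * (N.choose y : ℝ)) * ((y.descFactorial m : ℝ) * p^(y+1) * q^(N-y)) := by rw [h3']
          _ = ((N:ℝ)+1) * p * ((y.descFactorial m : ℝ) * (N.choose y) * p^y * q^(N-y)) := by ring
      rw [Finset.sum_congr rfl key, ← Finset.mul_sum, ih N]
      have h5 : (N+1).descFactorial (m+1) = (N+1) * N.descFactorial m :=
        Nat.succ_descFactorial_succ N m
      rw [h5]
      push_cast
      ring

lemma aux_log_ratio (n : ℕ) (lam : ℝ) (h0 : 0 < lam) (h1 : lam < n) (x : ℕ) (hx : x ≤ n) :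
    Real.log (binomialPmf n (lam / n) x / poissonPmf lam x)
      = (∑ k ∈ Finset.range x, Real.log (1 - (k : ℝ)/n)) + ((n:ℝ) - x) * Real.log (1 - lam/n) + lam := by
  have hN : (0:ℝ) < n := h0.trans h1
  set N : ℝ := (n : ℝ) with hNdef
  set p : ℝ := lam / N with hpdef
  have hp0 : 0 < p := div_pos h0 hN
  have hp1 : p < 1 := (div_lt_one hN).mpr h1
  set q : ℝ := 1 - p with hqdef
  have hq0 : 0 < q := by simp [hqdef]; linarith
  have hfac : (x.factorial : ℝ) ≠ 0 := Nat.cast_ne_zero.mpr x.factorial_ne_zero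
  have hfacpos : (0:ℝ) < x.factorial := Nat.cast_pos.mpr x.factorial_pos
  have hfactor : ∀ k ∈ Finset.range x, (0:ℝ) < 1 - (k:ℝ)/N := by
    intro k hk
    have hk' : (k:ℝ) < N := by
      have h : k < n := lt_of_lt_of_le (Finset.mem_range.mp hk) hx
      rw [hNdef]
      exact_mod_cast h
    have : (k:ℝ)/N < 1 := (div_lt_one hN).mpr hk'
    linarith
  have hdesc : (n.descFactorial x : ℝ) = ∏ k ∈ Finset.range x, (N - (k:ℝ)) := by
    rw [Nat.descFactorial_eq_prod_range, Nat.cast_prod]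
    exact Finset.prod_congr rfl (fun i hi =>
      Nat.cast_sub (le_of_lt (lt_of_lt_of_le (Finset.mem_range.mp hi) hx)))
  have hprod : (∏ k ∈ Finset.range x, (1 - (k:ℝ)/N)) = (n.descFactorial x : ℝ) / N^x := by
    rw [hdesc]
    rw [show (N:ℝ)^x = ∏ _k ∈ Finset.range x, N by simp]
    rw [← Finset.prod_div_distrib]
    exact Finset.prod_congr rfl (fun i hi => by rw [sub_div, div_self hN.ne'])
  have hchoose : (n.descFactorial x : ℝ) = (x.factorial : ℝ) * (n.choose x : ℝ) := by
    rw [Nat.descFactorial_eq_factorial_mul_choose]; push_cast; ring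
  have hlam : lam = N * p := by rw [hpdef]; field_simp
  have hratio : binomialPmf n p x / poissonPmf lam x
      = (∏ k ∈ Finset.range x, (1 - (k:ℝ)/N)) * q^(n-x) * Real.exp lam := by
    rw [hprod]
    simp only [binomialPmf, poissonPmf, if_pos hx]
    rw [hlam, mul_pow, Real.exp_neg]
    have hexp : Real.exp lam ≠ 0 := (Real.exp_pos lam).ne'
    have hppow : p ^ x ≠ 0 := pow_ne_zero _ hp0.ne'
    have hNpow : N ^ x ≠ 0 := pow_ne_zero _ hN.ne'
    field_simp [hchoose]
    rw [hchoose, hqdef]; ring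
  have hprodpos : (0:ℝ) < ∏ k ∈ Finset.range x, (1 - (k:ℝ)/N) := Finset.prod_pos hfactor
  rw [hratio, Real.log_mul (by positivity) (Real.exp_pos lam).ne', Real.log_exp,
    Real.log_mul hprodpos.ne' (by positivity), Real.log_pow,
    Real.log_prod (fun k hk => (hfactor k hk).ne')]
  have hc : ((n - x : ℕ) : ℝ) = N - x := by
    rw [Nat.cast_sub hx]
  rw [hc]

/-- relative entropy from Binomial(n, λ/n) to Poisson(λ). -/
theorem binomial_poisson_relEnt (n : ℕ) (lam : ℝ) (h0 : 0 < lam) (h1 : lam < n) :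
    relEnt (binomialPmf n (lam / n)) (poissonPmf lam) ≤ lam ^ 2 / (n * (n - lam)) := by
  have hN : (0:ℝ) < n := h0.trans h1
  set N : ℝ := (n : ℝ) with hNdef
  set p : ℝ := lam / N with hpdef
  have hp0 : 0 < p := div_pos h0 hN
  have hp1 : p < 1 := (div_lt_one hN).mpr h1
  set q : ℝ := 1 - p with hqdef
  have hq0 : 0 < q := by rw [hqdef]; linarith
  have hpq : p + q = 1 := by rw [hqdef]; ring
  have hlam : lam = N * p := by rw [hpdef]; field_simp
  set P : ℕ → ℝ := binomialPmf n p with hPdef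
  have hPval : ∀ x ∈ Finset.range (n+1), P x = (n.choose x : ℝ) * p^x * q^(n-x) := by
    intro x hx
    have hx' : x ≤ n := by
      have := Finset.mem_range.mp hx; omega
    simp only [hPdef, binomialPmf, if_pos hx', hqdef]
  have hmom : ∀ m : ℕ, ∑ x ∈ Finset.range (n+1), (x.descFactorial m : ℝ) * P x
      = (n.descFactorial m : ℝ) * p^m := by
    intro m
    rw [← aux_moment p q hpq m n]
    refine Finset.sum_congr rfl fun x hx => ?_
    rw [hPval x hx]; ring
  have hsum1 : ∑ x ∈ Finset.range (n+1), P x = 1 := by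
    have h := hmom 0
    simpa using h
  have hmean : ∑ x ∈ Finset.range (n+1), (x:ℝ) * P x = lam := by
    have h := hmom 1
    simp only [Nat.descFactorial_one, pow_one] at h
    rw [h, ← hlam]
  set L : ℕ → ℝ := fun x => ∑ k ∈ Finset.range x, Real.log (1 - (k:ℝ)/N) with hLdef
  set T : ℝ := ∑ x ∈ Finset.range (n+1), P x * L x with hTdef
  have hP0 : ∀ x ∉ Finset.range (n+1), P x * Real.log (P x / poissonPmf lam x) = 0 := by
    intro x hx
    have hx' : ¬ x ≤ n := by
      have := Finset.mem_range.not.mp hx; omega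
    simp [hPdef, binomialPmf, if_neg hx']
  have hq' : (1 : ℝ) - lam / (n:ℝ) = q := by rw [hqdef, hpdef, hNdef]
  have hD : relEnt P (poissonPmf lam) = T + (N - lam) * Real.log q + lam := by
    rw [relEnt, tsum_eq_sum hP0]
    calc ∑ x ∈ Finset.range (n+1), P x * Real.log (P x / poissonPmf lam x)
        = ∑ x ∈ Finset.range (n+1),
            (P x * L x + (P x * (N - (x:ℝ))) * Real.log q + lam * P x) := by
          refine Finset.sum_congr rfl fun x hx => ?_
          have hx' : x ≤ n := by
            have := Finset.mem_range.mp hx; omega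
          have hl := aux_log_ratio n lam h0 h1 x hx'
          rw [hq'] at hl
          rw [hPdef, hl, hLdef]
          ring
      _ = T + (∑ x ∈ Finset.range (n+1), P x * (N - (x:ℝ))) * Real.log q
            + lam * ∑ x ∈ Finset.range (n+1), P x := by
          rw [Finset.sum_add_distrib, Finset.sum_add_distrib, ← Finset.sum_mul,
            ← Finset.mul_sum, hTdef]
      _ = T + (N - lam) * Real.log q + lam := by
          have hs : ∑ x ∈ Finset.range (n+1), P x * (N - (x:ℝ)) = N - lam := by
            have heq : ∑ x ∈ Finset.range (n+1), P x * (N - (x:ℝ))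
                = N * (∑ x ∈ Finset.range (n+1), P x)
                  - ∑ x ∈ Finset.range (n+1), (x:ℝ) * P x := by
              rw [Finset.mul_sum, ← Finset.sum_sub_distrib]
              exact Finset.sum_congr rfl fun x _ => by ring
            rw [heq, hsum1, hmean]; ring
          rw [hs, hsum1]; ring
  set F : ℕ → ℝ := fun j => ∑ x ∈ Finset.range (n+1),
      P x * ∑ k ∈ Finset.range x, ((k:ℝ)/N)^(j+1)/((j:ℝ)+1) with hFdef
  have habs : ∀ x ∈ Finset.range (n+1), ∀ k ∈ Finset.range x, |(k:ℝ)/N| < 1 := by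
    intro x hx k hk
    have hkn : k < n := by
      have ha := Finset.mem_range.mp hx
      have hb := Finset.mem_range.mp hk
      omega
    have hkN : (k:ℝ) < N := by rw [hNdef]; exact_mod_cast hkn
    rw [abs_of_nonneg (by positivity)]
    exact (div_lt_one hN).mpr hkN
  have hFsum : HasSum F (-T) := by
    have hinner : ∀ x ∈ Finset.range (n+1),
        HasSum (fun j : ℕ => P x * ∑ k ∈ Finset.range x, ((k:ℝ)/N)^(j+1)/((j:ℝ)+1))
          (P x * (-L x)) := by
      intro x hx
      refine HasSum.mul_left _ ?_
      have h2 : HasSum (fun j : ℕ => ∑ k ∈ Finset.range x, ((k:ℝ)/N)^(j+1)/((j:ℝ)+1))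
          (∑ k ∈ Finset.range x, -Real.log (1 - (k:ℝ)/N)) := by
        refine hasSum_sum fun k hk => ?_
        exact_mod_cast hasSum_pow_div_log_of_abs_lt_one (habs x hx k hk)
      convert h2 using 1
      · rfl
      rw [hLdef, ← Finset.sum_neg_distrib]
    have h3 := hasSum_sum hinner
    convert h3 using 1
    rw [hTdef, ← Finset.sum_neg_distrib]
    exact Finset.sum_congr rfl fun x _ => by ring
  set G : ℕ → ℝ := fun j => N * p^(j+2)/(((j:ℝ)+1)*((j:ℝ)+2)) with hGdef
  have hlogq : HasSum (fun j : ℕ => p^(j+1)/((j:ℝ)+1)) (-Real.log q) := by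
    have h := hasSum_pow_div_log_of_abs_lt_one (x := p)
      (by rw [abs_of_nonneg hp0.le]; exact hp1)
    rw [hqdef]
    exact_mod_cast h
  have hA : HasSum (fun j : ℕ => p * (p^(j+1)/((j:ℝ)+1))) (p * -Real.log q) :=
    hlogq.mul_left p
  have hB : HasSum (fun j : ℕ => p^(j+2)/((j:ℝ)+2)) (-Real.log q - p) := by
    have hfe : (fun j : ℕ => p^(j+2)/((j:ℝ)+2))
        = (fun j : ℕ => p^((j+1)+1)/(((j+1 : ℕ):ℝ)+1)) := by
      funext j
      push_cast
      ring_nf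
    rw [hfe, hasSum_nat_add_iff (f := fun j : ℕ => p^(j+1)/((j:ℝ)+1)) 1]
    simpa using hlogq
  have hGsum : HasSum G ((N - lam) * Real.log q + lam) := by
    have h := (hA.sub hB).mul_left N
    convert h using 1
    · rfl
    · funext j
      have hj1 : ((j:ℝ)+1) ≠ 0 := by positivity
      have hj2 : ((j:ℝ)+2) ≠ 0 := by positivity
      have e : p * (p ^ (j + 1) / ((j:ℝ) + 1)) - p ^ (j + 2) / ((j:ℝ) + 2)
          = p^(j+2)/(((j:ℝ)+1)*((j:ℝ)+2)) := by
        field_simp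
        ring
      rw [hGdef, e]
      exact mul_div_assoc N (p^(j+2)) (((j:ℝ)+1)*((j:ℝ)+2))
    · rw [hlam]; ring
  have hGF : HasSum (fun j => G j - F j) (((N - lam) * Real.log q + lam) - (-T)) :=
    hGsum.sub hFsum
  have hPnn : ∀ x ∈ Finset.range (n+1), 0 ≤ P x := by
    intro x hx
    rw [hPval x hx]
    positivity
  have hbound : ∀ j : ℕ, G j - F j ≤ p^(j+2)/2 := by
    intro j
    have hj1 : (0:ℝ) < (j:ℝ)+1 := by positivity
    have hj2 : (0:ℝ) < (j:ℝ)+2 := by positivity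
    have hM : (0:ℝ) < N^(j+1) := by positivity
    have hFj : ((n.descFactorial (j+2) : ℝ) * p^(j+2)) / (((j:ℝ)+1)*((j:ℝ)+2)*N^(j+1)) ≤ F j := by
      have hinner : ∀ x ∈ Finset.range (n+1),
          ((x.descFactorial (j+2) : ℝ))/(((j:ℝ)+1)*((j:ℝ)+2)*N^(j+1))
            ≤ ∑ k ∈ Finset.range x, ((k:ℝ)/N)^(j+1)/((j:ℝ)+1) := by
        intro x hx
        have hsd : ((x.descFactorial (j+2) : ℝ))
            = ((j:ℝ)+2) * ∑ k ∈ Finset.range x, (k.descFactorial (j+1) : ℝ) := by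
          have h := aux_sum_desc (j+1) x
          push_cast [← h]
          ring
        calc ((x.descFactorial (j+2) : ℝ))/(((j:ℝ)+1)*((j:ℝ)+2)*N^(j+1))
            = (∑ k ∈ Finset.range x, (k.descFactorial (j+1) : ℝ))/(((j:ℝ)+1)*N^(j+1)) := by
              rw [hsd]
              field_simp
          _ = ∑ k ∈ Finset.range x, (k.descFactorial (j+1) : ℝ)/(((j:ℝ)+1)*N^(j+1)) :=
              Finset.sum_div _ _ _
          _ ≤ ∑ k ∈ Finset.range x, ((k:ℝ)/N)^(j+1)/((j:ℝ)+1) := by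
              refine Finset.sum_le_sum fun k hk => ?_
              have hkp : ((k.descFactorial (j+1) : ℝ)) ≤ (k:ℝ)^(j+1) := by
                exact_mod_cast Nat.descFactorial_le_pow k (j+1)
              rw [div_pow, div_div, mul_comm (N^(j+1)) (((j:ℝ)+1))]
              exact div_le_div_of_nonneg_right hkp (by positivity) |>.trans_eq rfl
          
      calc ((n.descFactorial (j+2) : ℝ) * p^(j+2)) / (((j:ℝ)+1)*((j:ℝ)+2)*N^(j+1))
          = ∑ x ∈ Finset.range (n+1),
              P x * (((x.descFactorial (j+2) : ℝ))/(((j:ℝ)+1)*((j:ℝ)+2)*N^(j+1))) := by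
            rw [← hmom (j+2)]
            rw [Finset.sum_div]
            exact Finset.sum_congr rfl fun x _ => by ring
        _ ≤ F j := by
            rw [hFdef]
            refine Finset.sum_le_sum fun x hx => ?_
            exact mul_le_mul_of_nonneg_left (hinner x hx) (hPnn x hx)
    have hcast : 2*(N*N^(j+1)) ≤ 2*(n.descFactorial (j+2):ℝ)
        + N^(j+1)*(((j:ℝ)+1)*((j:ℝ)+2)) := by
      have h : 2 * n^(j+2) ≤ 2 * n.descFactorial (j+2) + n^(j+1) * ((j+1)*(j+2)) :=
        aux_desc_lower n (j+1)
      have h2 : ((2 * n^(j+2) : ℕ) : ℝ)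
          ≤ ((2 * n.descFactorial (j+2) + n^(j+1) * ((j+1)*(j+2)) : ℕ) : ℝ) := by
        exact_mod_cast h
      push_cast at h2
      have hNn : N = (n:ℝ) := hNdef
      rw [hNn]
      have hpow : (n:ℝ)^(j+2) = (n:ℝ)*(n:ℝ)^(j+1) := by ring
      linarith [h2]
    have e1 : G j - ((n.descFactorial (j+2) : ℝ) * p^(j+2)) / (((j:ℝ)+1)*((j:ℝ)+2)*N^(j+1))
        = p^(j+2) * ((N*N^(j+1) - (n.descFactorial (j+2):ℝ))/(((j:ℝ)+1)*((j:ℝ)+2)*N^(j+1))) := by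
      rw [hGdef]
      field_simp
    have e2 : (N*N^(j+1) - (n.descFactorial (j+2):ℝ))/(((j:ℝ)+1)*((j:ℝ)+2)*N^(j+1)) ≤ 1/2 := by
      rw [div_le_iff₀ (by positivity)]
      nlinarith [hcast]
    calc G j - F j
        ≤ G j - ((n.descFactorial (j+2) : ℝ) * p^(j+2)) / (((j:ℝ)+1)*((j:ℝ)+2)*N^(j+1)) := by
          linarith [hFj]
      _ = p^(j+2) * ((N*N^(j+1) - (n.descFactorial (j+2):ℝ))/(((j:ℝ)+1)*((j:ℝ)+2)*N^(j+1))) := e1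
      _ ≤ p^(j+2) * (1/2) := mul_le_mul_of_nonneg_left e2 (by positivity)
      _ = p^(j+2)/2 := by ring
  have hhalf : HasSum (fun j : ℕ => p^(j+2)/2) (p^2/(2*q)) := by
    have h := (hasSum_geometric_of_lt_one hp0.le hp1).mul_left (p^2/2)
    convert h using 1
    · rfl
    · funext j
      ring
    · have h10 : (1:ℝ) - p ≠ 0 := by linarith
      rw [hqdef]
      field_simp
  have hfinal : relEnt P (poissonPmf lam) ≤ p^2/(2*q) := by
    rw [hD]
    have h := Summable.tsum_le_tsum hbound hGF.summable hhalf.summable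
    rw [hGF.tsum_eq, hhalf.tsum_eq] at h
    linarith
  have hlast : p^2/(2*q) ≤ lam^2/(N*(N-lam)) := by
    have hq2 : N - lam = N * q := by rw [hqdef, hlam]; ring
    have he : lam^2/(N*(N-lam)) = p^2/q := by
      rw [hq2, hlam]
      field_simp
    rw [he]
    have : p^2/(2*q) ≤ p^2/q := by
      apply div_le_div_of_nonneg_left (by positivity) hq0
      linarith
    exact this
  linarith


end
end

section
/- For any λ > 0 and any function g on the nonnegative integers for which both sides are finite, the Poisson distribution satisfies the Poincaré inequality Var_{Π_λ}(g) ≤ λ Σ_{x≥0} Π_λ(x) (g(x+1) − g(x))², i.e. the Poisson mass function Π_λ has Poincaré constant λ. -/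
noncomputable section
open scoped BigOperators ENNReal
open Real

open Filter Topology

def binomExp (n : ℕ) (p : ℝ) (f : ℕ → ℝ) : ℝ :=
  ∑ x ∈ Finset.range (n+1), binomialPmf n p x * f x

lemma b_nonneg {p : ℝ} (hp0 : 0 ≤ p) (hp1 : p ≤ 1) (n x : ℕ) : 0 ≤ binomialPmf n p x := by
  unfold binomialPmf
  split
  · have : (0:ℝ) ≤ 1 - p := by linarith
    positivity
  · exact le_refl _

lemma b_zero {p : ℝ} {n x : ℕ} (h : n < x) : binomialPmf n p x = 0 := by
  simp [binomialPmf, Nat.not_le.2 h]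

lemma b_succ (p : ℝ) (n x : ℕ) : binomialPmf (n+1) p x
    = (1-p) * binomialPmf n p x + p * (if x = 0 then 0 else binomialPmf n p (x-1)) := by
  cases x with
  | zero => simp [binomialPmf, pow_succ]; ring
  | succ y =>
    simp only [Nat.succ_ne_zero, if_false, Nat.add_sub_cancel]
    by_cases hy : y ≤ n
    · by_cases hy1 : y + 1 ≤ n
      · have h1 : y + 1 ≤ n + 1 := by omega
        have hsub : (n+1) - (y+1) = n - y := by omega
        have hsub2 : n - y = (n - (y+1)) + 1 := by omega
        have hch : ((n+1).choose (y+1) : ℝ) = (n.choose (y+1) : ℝ) + (n.choose y : ℝ) := by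
          rw [Nat.choose_succ_succ]; push_cast; ring
        simp only [binomialPmf, if_pos h1, if_pos hy, if_pos hy1, hsub, hch, hsub2, pow_succ]
        ring
      · have hyn : y = n := by omega
        subst hyn
        simp only [binomialPmf, if_pos (le_refl (y+1)), if_pos (le_refl y),
          if_neg hy1, Nat.sub_self, Nat.choose_self, Nat.cast_one, pow_zero, pow_succ]
        ring
    · have h1 : ¬ (y + 1 ≤ n + 1) := by omega
      have h2 : ¬ (y + 1 ≤ n) := by omega
      simp [binomialPmf, h1, h2, hy]

lemma binomExp_succ (p : ℝ) (n : ℕ) (f : ℕ → ℝ) :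
    binomExp (n+1) p f = (1-p) * binomExp n p f + p * binomExp n p (fun x => f (x+1)) := by
  unfold binomExp
  have h : ∀ x ∈ Finset.range (n+2), binomialPmf (n+1) p x * f x
      = (1-p) * (binomialPmf n p x * f x)
        + p * ((if x = 0 then 0 else binomialPmf n p (x-1) * f x)) := by
    intro x _
    rw [b_succ]
    rcases Nat.eq_zero_or_pos x with h0 | h0
    · subst h0; simp [mul_assoc]
    · rw [if_neg (Nat.pos_iff_ne_zero.mp h0), if_neg (Nat.pos_iff_ne_zero.mp h0)]; ring
  rw [Finset.sum_congr rfl h, Finset.sum_add_distrib, ← Finset.mul_sum, ← Finset.mul_sum]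
  congr 1
  · congr 1
    rw [Finset.sum_range_succ, b_zero (Nat.lt_succ_self n)]
    simp
  · congr 1
    rw [Finset.sum_range_succ']
    simp

lemma binomExp_one (p : ℝ) (n : ℕ) : binomExp n p (fun _ => 1) = 1 := by
  have h := add_pow p (1-p) n
  simp only [add_sub_cancel, one_pow] at h
  unfold binomExp
  simp only [mul_one]
  refine Eq.trans ?_ h.symm
  refine Finset.sum_congr rfl (fun x hx => ?_)
  have : x ≤ n := Nat.lt_succ_iff.mp (Finset.mem_range.mp hx)
  simp only [binomialPmf, if_pos this]
  ring

lemma binomExp_congr (p : ℝ) (n : ℕ) {f g : ℕ → ℝ} (h : ∀ x, f x = g x) :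
    binomExp n p f = binomExp n p g :=
  Finset.sum_congr rfl (fun x _ => by rw [h])

lemma binomExp_lin (p : ℝ) (n : ℕ) (a b : ℝ) (u v : ℕ → ℝ) :
    binomExp n p (fun x => a * u x + b * v x) = a * binomExp n p u + b * binomExp n p v := by
  unfold binomExp
  rw [Finset.mul_sum, Finset.mul_sum, ← Finset.sum_add_distrib]
  exact Finset.sum_congr rfl (fun x _ => by ring)

lemma binomExp_mono {p : ℝ} (hp0 : 0 ≤ p) (hp1 : p ≤ 1) (n : ℕ) {f g : ℕ → ℝ}
    (h : ∀ x, f x ≤ g x) : binomExp n p f ≤ binomExp n p g :=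
  Finset.sum_le_sum (fun x _ => mul_le_mul_of_nonneg_left (h x) (b_nonneg hp0 hp1 n x))

lemma binomExp_nonneg {p : ℝ} (hp0 : 0 ≤ p) (hp1 : p ≤ 1) (n : ℕ) {f : ℕ → ℝ}
    (h : ∀ x, 0 ≤ f x) : 0 ≤ binomExp n p f :=
  Finset.sum_nonneg (fun x _ => mul_nonneg (b_nonneg hp0 hp1 n x) (h x))

lemma binomExp_zero (p : ℝ) (f : ℕ → ℝ) : binomExp 0 p f = f 0 := by
  simp [binomExp, binomialPmf]

-- variance decomposition
lemma var_decomp (p : ℝ) (n : ℕ) (g : ℕ → ℝ) :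
    binomExp (n+1) p (fun x => (g x - binomExp (n+1) p g)^2)
      = p*(1-p) * binomExp n p (fun x => (g (x+1) - g x)^2)
        + binomExp n p (fun x =>
            ((1-p)*g x + p*g (x+1) - binomExp n p (fun y => (1-p)*g y + p*g (y+1)))^2) := by
  set h : ℕ → ℝ := fun x => (1-p)*g x + p*g (x+1) with hh
  have hm : binomExp (n+1) p g = binomExp n p h := by
    rw [binomExp_succ, hh, binomExp_lin]
  set m := binomExp n p h with hm'
  rw [hm]
  rw [binomExp_succ]
  have key : ∀ x, (1-p) * ((g x - m)^2) + p * ((g (x+1) - m)^2)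
      = p*(1-p)*((g (x+1) - g x)^2) + 1*((h x - m)^2) := by
    intro x; simp only [hh]; ring
  calc (1-p) * binomExp n p (fun x => (g x - m)^2) + p * binomExp n p (fun x => (g (x+1) - m)^2)
      = binomExp n p (fun x => (1-p) * ((g x - m)^2) + p * ((g (x+1) - m)^2)) := by
        rw [binomExp_lin]
    _ = binomExp n p (fun x => p*(1-p)*((g (x+1) - g x)^2) + 1*((h x - m)^2)) :=
        binomExp_congr p n key
    _ = p*(1-p) * binomExp n p (fun x => (g (x+1) - g x)^2) + binomExp n p (fun x => (h x - m)^2) := by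
        rw [binomExp_lin]; ring

lemma binom_poincare {p : ℝ} (hp0 : 0 ≤ p) (hp1 : p ≤ 1) :
    ∀ (n : ℕ) (g : ℕ → ℝ),
    binomExp (n+1) p (fun x => (g x - binomExp (n+1) p g)^2)
      ≤ (n+1 : ℝ) * (p*(1-p)) * binomExp n p (fun x => (g (x+1) - g x)^2) := by
  intro n
  induction n with
  | zero =>
    intro g
    rw [var_decomp]
    have : binomExp 0 p (fun x =>
        ((1-p)*g x + p*g (x+1) - binomExp 0 p (fun y => (1-p)*g y + p*g (y+1)))^2) = 0 := by
      rw [binomExp_zero, binomExp_zero]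
      ring
    rw [this]
    simp
  | succ n ih =>
    intro g
    rw [var_decomp]
    set h : ℕ → ℝ := fun x => (1-p)*g x + p*g (x+1) with hh
    have h1 := ih h
    have h2 : binomExp n p (fun x => (h (x+1) - h x)^2)
        ≤ binomExp (n+1) p (fun x => (g (x+1) - g x)^2) := by
      have step1 : ∀ x, (h (x+1) - h x)^2
          ≤ (1-p) * ((g (x+1) - g x)^2) + p * ((g (x+2) - g (x+1))^2) := by
        intro x
        simp only [hh]
        nlinarith [sq_nonneg ((g (x+2) - g (x+1)) - (g (x+1) - g x)), mul_nonneg hp0 (by linarith : (0:ℝ) ≤ 1 - p)]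
      calc binomExp n p (fun x => (h (x+1) - h x)^2)
          ≤ binomExp n p (fun x => (1-p) * ((g (x+1) - g x)^2) + p * ((g (x+2) - g (x+1))^2)) :=
            binomExp_mono hp0 hp1 n step1
        _ = (1-p) * binomExp n p (fun x => (g (x+1) - g x)^2)
            + p * binomExp n p (fun x => (g (x+2) - g (x+1))^2) := binomExp_lin p n _ _ _ _
        _ = binomExp (n+1) p (fun x => (g (x+1) - g x)^2) := (binomExp_succ p n _).symm
    have h3 : 0 ≤ binomExp (n+1) p (fun x => (g (x+1) - g x)^2) :=
      binomExp_nonneg hp0 hp1 _ (fun x => sq_nonneg _)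
    have h4 : p * (1-p) * binomExp (n+1) p (fun x => (g (x+1) - g x)^2)
        + (n+1 : ℝ) * (p*(1-p)) * binomExp n p (fun x => (h (x+1) - h x)^2)
        ≤ (n+1+1 : ℝ) * (p*(1-p)) * binomExp (n+1) p (fun x => (g (x+1) - g x)^2) := by
      have hpp : 0 ≤ p * (1-p) := mul_nonneg hp0 (by linarith)
      nlinarith [mul_le_mul_of_nonneg_left h2 (mul_nonneg (by positivity : (0:ℝ) ≤ (n+1:ℝ)) hpp)]
    calc p*(1-p) * binomExp (n+1) p (fun x => (g (x+1) - g x)^2)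
          + binomExp (n+1) p (fun x => (h x - binomExp (n+1) p h)^2)
        ≤ p*(1-p) * binomExp (n+1) p (fun x => (g (x+1) - g x)^2)
          + (n+1 : ℝ) * (p*(1-p)) * binomExp n p (fun x => (h (x+1) - h x)^2) := by
          exact add_le_add (le_refl _) h1
      _ ≤ (n+1+1 : ℝ) * (p*(1-p)) * binomExp (n+1) p (fun x => (g (x+1) - g x)^2) := h4
      _ = ((n+1 : ℕ)+1 : ℝ) * (p*(1-p)) * binomExp (n+1) p (fun x => (g (x+1) - g x)^2) := by
          push_cast; ring

lemma binomVar_eq (p : ℝ) (n : ℕ) (g : ℕ → ℝ) :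
    binomExp n p (fun x => (g x - binomExp n p g)^2)
      = binomExp n p (fun x => (g x)^2) - (binomExp n p g)^2 := by
  set m := binomExp n p g with hm
  have e1 : binomExp n p (fun x => (g x - m)^2)
      = binomExp n p (fun x => 1 * (1 * ((g x)^2) + (-(2*m)) * (g x)) + (m^2) * 1) := by
    exact binomExp_congr p n (fun x => by ring)
  rw [e1]
  have e2 := binomExp_lin p n 1 (-(2*m)) (fun x => (g x)^2) g
  have e3 := binomExp_lin p n 1 (m^2) (fun x => 1 * (g x)^2 + (-(2*m)) * g x) (fun _ => (1:ℝ))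
  rw [e3, e2, binomExp_one]
  ring

lemma poisson_eq (l : ℝ) (x : ℕ) : poissonPmf l x = Real.exp (-l) * (l ^ x / (Nat.factorial x)) := by
  simp [poissonPmf, mul_div_assoc]

lemma poisson_nonneg {l : ℝ} (hl : 0 ≤ l) (x : ℕ) : 0 ≤ poissonPmf l x := by
  rw [poisson_eq]; positivity

lemma summable_poisson_mul (l : ℝ) (f : ℕ → ℝ)
    (h : Summable (fun x => l ^ x / (Nat.factorial x) * f x)) :
    Summable (fun x => poissonPmf l x * f x) := by
  have := h.mul_left (Real.exp (-l))
  refine this.congr (fun x => ?_)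
  rw [poisson_eq]; ring

lemma summable_poisson (l : ℝ) : Summable (poissonPmf l) := by
  have := (Real.summable_pow_div_factorial l).mul_left (Real.exp (-l))
  exact this.congr (fun x => (poisson_eq l x).symm)

lemma tsum_poisson (l : ℝ) : ∑' x, poissonPmf l x = 1 := by
  have h1 : ∑' x, poissonPmf l x = Real.exp (-l) * ∑' x : ℕ, l ^ x / (Nat.factorial x) := by
    rw [← tsum_mul_left]
    exact tsum_congr (fun x => poisson_eq l x)
  have h2 : ∑' x : ℕ, l ^ x / (Nat.factorial x) = Real.exp l := by
    rw [Real.exp_eq_exp_ℝ, NormedSpace.exp_eq_tsum_div]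
  rw [h1, h2, ← Real.exp_add]
  simp

lemma choose_le_real (m x : ℕ) : (m.choose x : ℝ) ≤ (m : ℝ) ^ x / (Nat.factorial x) := by
  rw [le_div_iff₀ (by positivity : (0:ℝ) < (Nat.factorial x : ℝ))]
  have h1 : m.descFactorial x = (Nat.factorial x) * m.choose x :=
    Nat.descFactorial_eq_factorial_mul_choose m x
  have h2 : m.descFactorial x ≤ m ^ x := Nat.descFactorial_le_pow m x
  have : (Nat.factorial x) * m.choose x ≤ m ^ x := h1 ▸ h2
  calc (m.choose x : ℝ) * (Nat.factorial x : ℝ) = ((Nat.factorial x * m.choose x : ℕ) : ℝ) := by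
        push_cast; ring
    _ ≤ ((m ^ x : ℕ) : ℝ) := by exact_mod_cast this
    _ = (m : ℝ) ^ x := by push_cast; ring

lemma b_bound {lam : ℝ} (hlam : 0 < lam) {c : ℕ} (hc : lam < c) (a n x : ℕ) :
    binomialPmf (n + c - a) (lam / ((n + c : ℕ) : ℝ)) x ≤ lam ^ x / (Nat.factorial x) := by
  set ν : ℝ := ((n + c : ℕ) : ℝ) with hν
  have hcpos : 0 < (c:ℝ) := lt_trans hlam hc
  have hνpos : 0 < ν := by
    rw [hν]; push_cast
    have : (0:ℝ) ≤ (n:ℝ) := Nat.cast_nonneg n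
    linarith
  have hνlam : lam < ν := by
    rw [hν]; push_cast
    have : (0:ℝ) ≤ (n:ℝ) := Nat.cast_nonneg n
    linarith
  set p : ℝ := lam / ν with hp
  have hp0 : 0 ≤ p := div_nonneg hlam.le hνpos.le
  have hp1 : p ≤ 1 := by
    rw [hp, div_le_one hνpos]; exact hνlam.le
  set m := n + c - a with hm
  by_cases hxm : x ≤ m
  · rw [binomialPmf]
    simp only [if_pos hxm]
    have h1 : (1 - p) ^ (m - x) ≤ 1 :=
      pow_le_one₀ (by linarith) (by linarith)
    have h2 : (m.choose x : ℝ) * p ^ x * (1 - p) ^ (m - x) ≤ (m.choose x : ℝ) * p ^ x := by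
      have : 0 ≤ (m.choose x : ℝ) * p ^ x := by positivity
      nlinarith
    refine h2.trans ?_
    have h3 : (m.choose x : ℝ) * p ^ x ≤ (m:ℝ)^x / (Nat.factorial x) * p ^ x := by
      have := choose_le_real m x
      have hppos : 0 ≤ p ^ x := by positivity
      nlinarith
    refine h3.trans ?_
    have h4 : (m:ℝ)^x / (Nat.factorial x) * p ^ x = ((m:ℝ) * p) ^ x / (Nat.factorial x) := by
      rw [mul_pow]; ring
    rw [h4]
    have h5 : (m:ℝ) * p ≤ lam := by
      rw [hp]
      have hmν : (m:ℝ) ≤ ν := by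
        rw [hν, hm]; exact_mod_cast Nat.cast_le.mpr (Nat.sub_le _ _)
      calc (m:ℝ) * (lam / ν) ≤ ν * (lam / ν) := by
            have : 0 ≤ lam / ν := div_nonneg hlam.le hνpos.le
            nlinarith
        _ = lam := by field_simp
    have h6 : ((m:ℝ) * p) ^ x ≤ lam ^ x := by
      have : 0 ≤ (m:ℝ) * p := mul_nonneg (Nat.cast_nonneg m) hp0
      exact pow_le_pow_left₀ this h5 x
    exact div_le_div_of_nonneg_right h6 (by positivity) |>.trans_eq rfl
  · rw [b_zero (Nat.not_le.mp hxm)]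
    positivity

lemma binom_tendsto {lam : ℝ} (hlam : 0 < lam) {c : ℕ} (hc : lam < c) {a : ℕ} (ha : a ≤ c)
    (x : ℕ) :
    Tendsto (fun n : ℕ => binomialPmf (n + c - a) (lam / ((n + c : ℕ) : ℝ)) x) atTop
      (𝓝 (poissonPmf lam x)) := by
  set ν : ℕ → ℝ := fun n => ((n + c : ℕ) : ℝ) with hν
  have hcpos : 0 < (c:ℝ) := lt_trans hlam hc
  have hνpos : ∀ n, 0 < ν n := by
    intro n; simp only [hν]; push_cast
    have : (0:ℝ) ≤ (n:ℝ) := Nat.cast_nonneg n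
    linarith
  have hνlam : ∀ n, lam < ν n := by
    intro n; simp only [hν]; push_cast
    have : (0:ℝ) ≤ (n:ℝ) := Nat.cast_nonneg n
    linarith
  have hν_top : Tendsto ν atTop atTop :=
    tendsto_natCast_atTop_atTop.comp (tendsto_add_atTop_nat c)
  have t1 : Tendsto (fun n => 1 - lam / ν n) atTop (𝓝 1) := by
    have : Tendsto (fun n => lam / ν n) atTop (𝓝 0) :=
      Tendsto.div_atTop tendsto_const_nhds hν_top
    have h := (tendsto_const_nhds (x := (1:ℝ)) (f := atTop)).sub this
    simpa using h
  have t2 : Tendsto (fun n : ℕ => (1 - lam / ν n) ^ (n + c)) atTop (𝓝 (Real.exp (-lam))) := by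
    have h := (Real.tendsto_one_add_div_pow_exp (-lam)).comp (tendsto_add_atTop_nat c)
    refine h.congr (fun n => ?_)
    simp only [Function.comp]
    congr 1
    rw [neg_div, ← sub_eq_add_neg]
  have t3 : Tendsto (fun n : ℕ => (1 - lam / ν n) ^ (a + x)) atTop (𝓝 1) := by
    have := t1.pow (a + x)
    simpa using this
  have t4 : Tendsto (fun n : ℕ => ∏ i ∈ Finset.range x, (((n + c - a - i : ℕ) : ℝ) / ν n))
      atTop (𝓝 1) := by
    have h : Tendsto (fun n : ℕ => ∏ i ∈ Finset.range x, (1 - ((a + i : ℕ) : ℝ) / ν n))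
        atTop (𝓝 (∏ _i ∈ Finset.range x, (1:ℝ))) := by
      refine tendsto_finset_prod _ (fun i _ => ?_)
      have : Tendsto (fun n => ((a + i : ℕ) : ℝ) / ν n) atTop (𝓝 0) :=
        Tendsto.div_atTop tendsto_const_nhds hν_top
      have h2 := (tendsto_const_nhds (x := (1:ℝ)) (f := atTop)).sub this
      simpa using h2
    simp only [Finset.prod_const_one] at h
    refine Tendsto.congr' ?_ h
    filter_upwards [eventually_ge_atTop (a + x)] with n hn
    refine Finset.prod_congr rfl (fun i hi => ?_)
    have hix : i < x := Finset.mem_range.mp hi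
    have hle : a + i ≤ n + c := by omega
    have : ((n + c - a - i : ℕ) : ℝ) = ν n - ((a + i : ℕ) : ℝ) := by
      simp only [hν]
      have : n + c - a - i = n + c - (a + i) := by omega
      rw [this, Nat.cast_sub hle]
    rw [this, sub_div, div_self (hνpos n).ne']
  -- eventual equality
  have heq : ∀ᶠ n in atTop, binomialPmf (n + c - a) (lam / ν n) x
      = (lam ^ x / (Nat.factorial x))
        * (∏ i ∈ Finset.range x, (((n + c - a - i : ℕ) : ℝ) / ν n))
        * ((1 - lam / ν n) ^ (n + c) / (1 - lam / ν n) ^ (a + x)) := by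
    filter_upwards [eventually_ge_atTop x] with n hn
    set m := n + c - a with hm
    have hxm : x ≤ m := by omega
    have hνne : ν n ≠ 0 := (hνpos n).ne'
    have h1p : 0 < 1 - lam / ν n := by
      have := hνlam n
      rw [sub_pos, div_lt_one (hνpos n)]
      exact this
    rw [binomialPmf]
    simp only [if_pos hxm]
    have hch : (m.choose x : ℝ) = (∏ i ∈ Finset.range x, ((m - i : ℕ) : ℝ)) / (Nat.factorial x) := by
      rw [eq_div_iff (by positivity : (Nat.factorial x : ℝ) ≠ 0)]
      have h1 : m.descFactorial x = (Nat.factorial x) * m.choose x :=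
        Nat.descFactorial_eq_factorial_mul_choose m x
      have h2 : m.descFactorial x = ∏ i ∈ Finset.range x, (m - i) :=
        Nat.descFactorial_eq_prod_range m x
      have : ((Nat.factorial x) * m.choose x : ℕ) = (∏ i ∈ Finset.range x, (m - i) : ℕ) := by
        rw [← h1, h2]
      calc (m.choose x : ℝ) * (Nat.factorial x : ℝ) = (((Nat.factorial x) * m.choose x : ℕ) : ℝ) := by
            push_cast; ring
        _ = ((∏ i ∈ Finset.range x, (m - i) : ℕ) : ℝ) := by exact_mod_cast this
        _ = ∏ i ∈ Finset.range x, ((m - i : ℕ) : ℝ) := by push_cast; ring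
    have hprod : ∏ i ∈ Finset.range x, (((m - i : ℕ) : ℝ) / ν n)
        = (∏ i ∈ Finset.range x, ((m - i : ℕ) : ℝ)) / (ν n) ^ x := by
      rw [Finset.prod_div_distrib, Finset.prod_const, Finset.card_range]
    have hpow : (1 - lam / ν n) ^ (m - x) = (1 - lam / ν n) ^ (n + c) / (1 - lam / ν n) ^ (a + x) := by
      rw [eq_div_iff (by positivity : (1 - lam / ν n) ^ (a + x) ≠ 0), ← pow_add]
      congr 1
      omega
    rw [hch, hpow, div_pow, hprod]
    ring
  have hlim : Tendsto (fun n : ℕ => (lam ^ x / (Nat.factorial x))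
        * (∏ i ∈ Finset.range x, (((n + c - a - i : ℕ) : ℝ) / ν n))
        * ((1 - lam / ν n) ^ (n + c) / (1 - lam / ν n) ^ (a + x)))
      atTop (𝓝 ((lam ^ x / (Nat.factorial x)) * 1 * (Real.exp (-lam) / 1))) := by
    exact ((tendsto_const_nhds).mul t4).mul (t2.div t3 one_ne_zero)
  have : (lam ^ x / (Nat.factorial x)) * 1 * (Real.exp (-lam) / 1) = poissonPmf lam x := by
    simp only [poissonPmf, mul_one, div_one]
    ring
  rw [this] at hlim
  exact Tendsto.congr' (heq.mono (fun n h => h.symm)) hlim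

lemma tsum_binom (N : ℕ) (p : ℝ) (f : ℕ → ℝ) :
    ∑' x : ℕ, binomialPmf N p x * f x = binomExp N p f := by
  refine tsum_eq_sum (L := SummationFilter.unconditional ℕ) (s := Finset.range (N+1)) ?_
  intro x hx
  have : N < x := by
    by_contra h
    exact hx (Finset.mem_range.mpr (by omega))
  rw [b_zero this, zero_mul]

lemma tendsto_tsum_binom {lam : ℝ} (hlam : 0 < lam) {c : ℕ} (hc : lam < c) {a : ℕ} (ha : a ≤ c)
    (f : ℕ → ℝ) (hf : Summable fun x => poissonPmf lam x * f x) :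
    Tendsto (fun n : ℕ => ∑' x : ℕ, binomialPmf (n + c - a) (lam / ((n + c : ℕ) : ℝ)) x * f x)
      atTop (𝓝 (∑' x : ℕ, poissonPmf lam x * f x)) := by
  refine tendsto_tsum_of_dominated_convergence
    (bound := fun x => Real.exp lam * |poissonPmf lam x * f x|) (hf.abs.mul_left _)
    (fun x => (binom_tendsto hlam hc ha x).mul_const (f x)) ?_
  refine Filter.Eventually.of_forall (fun n x => ?_)
  have hcpos : 0 < (c:ℝ) := lt_trans hlam hc
  have hb := b_bound hlam hc a n x
  have hbnn : 0 ≤ binomialPmf (n + c - a) (lam / ((n + c : ℕ) : ℝ)) x := by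
    refine b_nonneg ?_ ?_ _ _
    · positivity
    · have hcnat : 0 < c := by exact_mod_cast hcpos
      have hnc : (0:ℝ) < ((n + c : ℕ) : ℝ) := by
        have : 0 < n + c := by omega
        exact_mod_cast this
      rw [div_le_one hnc]
      push_cast
      have : (0:ℝ) ≤ (n:ℝ) := Nat.cast_nonneg n
      linarith
  have key : lam ^ x / (Nat.factorial x) = Real.exp lam * poissonPmf lam x := by
    rw [poisson_eq, ← mul_assoc, ← Real.exp_add]
    simp
  calc ‖binomialPmf (n + c - a) (lam / ((n + c : ℕ) : ℝ)) x * f x‖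
      = binomialPmf (n + c - a) (lam / ((n + c : ℕ) : ℝ)) x * |f x| := by
        rw [norm_mul, Real.norm_eq_abs, Real.norm_eq_abs, abs_of_nonneg hbnn]
    _ ≤ lam ^ x / (Nat.factorial x) * |f x| :=
        mul_le_mul_of_nonneg_right hb (abs_nonneg _)
    _ = Real.exp lam * (poissonPmf lam x * |f x|) := by rw [key]; ring
    _ = Real.exp lam * |poissonPmf lam x * f x| := by
        rw [abs_mul, abs_of_nonneg (poisson_nonneg hlam.le x)]

theorem poisson_poincare' (lam : ℝ) (hlam : 0 < lam) (g : ℕ → ℝ)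
    (h1 : Summable (fun x : ℕ => poissonPmf lam x * g x))
    (h2 : Summable (fun x : ℕ =>
      poissonPmf lam x * (g x - ∑' y : ℕ, poissonPmf lam y * g y) ^ 2))
    (h3 : Summable (fun x : ℕ => poissonPmf lam x * (g (x + 1) - g x) ^ 2)) :
    (∑' x : ℕ, poissonPmf lam x * (g x - ∑' y : ℕ, poissonPmf lam y * g y) ^ 2) ≤
      lam * ∑' x : ℕ, poissonPmf lam x * (g (x + 1) - g x) ^ 2 := by
  set m : ℝ := ∑' y : ℕ, poissonPmf lam y * g y with hm
  -- summability of second moment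
  have sg2 : Summable (fun x : ℕ => poissonPmf lam x * (g x)^2) := by
    have hs : Summable (fun x : ℕ =>
        (poissonPmf lam x * (g x - m)^2 + (2*m) * (poissonPmf lam x * g x))
          - m^2 * poissonPmf lam x) :=
      (h2.add (h1.mul_left (2*m))).sub ((summable_poisson lam).mul_left (m^2))
    refine hs.congr (fun x => ?_)
    ring
  -- variance identity for the Poisson measure
  have hVar : (∑' x : ℕ, poissonPmf lam x * (g x - m) ^ 2)
      = (∑' x : ℕ, poissonPmf lam x * (g x)^2) - m^2 := by
    have e : ∀ x : ℕ, poissonPmf lam x * (g x - m) ^ 2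
        = (poissonPmf lam x * (g x)^2 - (2*m) * (poissonPmf lam x * g x))
          + m^2 * poissonPmf lam x := by
      intro x; ring
    rw [tsum_congr e,
      Summable.tsum_add (sg2.sub (h1.mul_left (2*m))) ((summable_poisson lam).mul_left (m^2)),
      Summable.tsum_sub sg2 (h1.mul_left (2*m)), tsum_mul_left, tsum_mul_left, tsum_poisson]
    rw [← hm]
    ring
  set c : ℕ := ⌈lam⌉₊ + 1 with hc'
  have hc : lam < c := by
    have := Nat.le_ceil lam
    have : lam ≤ (⌈lam⌉₊ : ℝ) := Nat.le_ceil lam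
    rw [hc']
    push_cast
    linarith
  have hc1 : 1 ≤ c := by omega
  have hT := tendsto_tsum_binom hlam hc (Nat.zero_le c) (fun x => (g x)^2) sg2
  have hM := tendsto_tsum_binom hlam hc (Nat.zero_le c) g h1
  have hR := tendsto_tsum_binom hlam hc hc1 (fun x => (g (x+1) - g x)^2) h3
  simp only [Nat.sub_zero] at hT hM
  have hLHS := hT.sub (hM.pow 2)
  have hRHS := hR.const_mul lam
  have key : ∀ n : ℕ,
      (∑' x : ℕ, binomialPmf (n + c) (lam / ((n + c : ℕ) : ℝ)) x * (g x)^2)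
        - (∑' x : ℕ, binomialPmf (n + c) (lam / ((n + c : ℕ) : ℝ)) x * g x)^2
      ≤ lam * ∑' x : ℕ, binomialPmf (n + c - 1) (lam / ((n + c : ℕ) : ℝ)) x
          * (g (x+1) - g x)^2 := by
    intro n
    have hνpos : (0:ℝ) < ((n + c : ℕ) : ℝ) := by
      have : 0 < n + c := by omega
      exact_mod_cast this
    set p : ℝ := lam / ((n + c : ℕ) : ℝ) with hp
    have hp0 : 0 ≤ p := div_nonneg hlam.le hνpos.le
    have hp1 : p ≤ 1 := by
      rw [hp, div_le_one hνpos]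
      have : lam < (c:ℝ) := hc
      have h2 : (c:ℝ) ≤ ((n + c : ℕ) : ℝ) := by push_cast; linarith [Nat.cast_nonneg (α := ℝ) n]
      linarith
    rw [tsum_binom, tsum_binom, tsum_binom, ← binomVar_eq]
    have hidx : n + c = (n + c - 1) + 1 := by omega
    rw [hidx]
    have hmain := binom_poincare hp0 hp1 (n + c - 1) g
    refine hmain.trans ?_
    have hX : 0 ≤ binomExp (n + c - 1) p (fun x => (g (x+1) - g x)^2) :=
      binomExp_nonneg hp0 hp1 _ (fun x => sq_nonneg _)
    have hcast : ((n + c - 1 : ℕ) : ℝ) + 1 = ((n + c : ℕ) : ℝ) := by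
      rw [show ((n + c - 1 : ℕ) : ℝ) + 1 = (((n + c - 1) + 1 : ℕ) : ℝ) by push_cast; ring,
        ← hidx]
    have hNp : (((n + c - 1 : ℕ) : ℝ) + 1) * p = lam := by
      rw [hcast, hp, mul_div_cancel₀ _ hνpos.ne']
    have hfactor : (((n + c - 1 : ℕ) : ℝ) + 1) * (p * (1 - p)) ≤ lam := by
      have h1p : 1 - p ≤ 1 := by linarith
      have hNnn : 0 ≤ ((n + c - 1 : ℕ) : ℝ) + 1 := by positivity
      nlinarith [mul_nonneg hNnn hp0]
    calc (((n + c - 1 : ℕ) : ℝ) + 1) * (p * (1 - p))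
          * binomExp (n + c - 1) p (fun x => (g (x+1) - g x)^2)
        ≤ lam * binomExp (n + c - 1) p (fun x => (g (x+1) - g x)^2) :=
          mul_le_mul_of_nonneg_right hfactor hX
      _ = lam * binomExp (n + c - 1) p (fun x => (g (x+1) - g x)^2) := rfl
  have final := le_of_tendsto_of_tendsto' hLHS hRHS key
  rw [hVar]
  exact final

/-- the Poisson distribution has Poincaré constant λ. -/
theorem poisson_poincare (lam : ℝ) (hlam : 0 < lam) (g : ℕ → ℝ)
    (h1 : Summable (fun x : ℕ => poissonPmf lam x * g x))
    (h2 : Summable (fun x : ℕ =>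
      poissonPmf lam x * (g x - ∑' y : ℕ, poissonPmf lam y * g y) ^ 2))
    (h3 : Summable (fun x : ℕ => poissonPmf lam x * (g (x + 1) - g x) ^ 2)) :
    pmfVar (poissonPmf lam) g ≤
      lam * ∑' x : ℕ, poissonPmf lam x * (g (x + 1) - g x) ^ 2 := by
  unfold pmfVar
  exact poisson_poincare' lam hlam g h1 h2 h3

end
end

section
/- For any two probability mass functions P and Q on the nonnegative integers with finite Johnstone–MacGibbon Fisher information, the convolution satisfies the subadditivity property I(P ⋆ Q) ≤ (I(P) + I(Q))/4. -/
noncomputable section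
open scoped BigOperators ENNReal
open Real

/-- finiteness of jmFisher forbids the `⊤` terms -/
lemma jm_aux_no_top {P : ℕ → ℝ} (h : jmFisher P ≠ ⊤) :
    ∀ x, P x = 0 → pm1 P x = 0 := by
  intro x hx
  by_contra hne
  apply h
  refine top_le_iff.mp ?_
  calc (⊤ : ℝ≥0∞) = (if P x = 0 ∧ pm1 P x ≠ 0 then ⊤
        else ENNReal.ofReal (P x * (pm1 P x / P x - 1) ^ 2)) := by
        rw [if_pos ⟨hx, hne⟩]
    _ ≤ jmFisher P := ENNReal.le_tsum x

lemma jm_aux_eq {P : ℕ → ℝ} (h0 : ∀ x, P x = 0 → pm1 P x = 0) :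
    jmFisher P = ∑' x, ENNReal.ofReal (P x * (pm1 P x / P x - 1) ^ 2) :=
  tsum_congr fun x => if_neg (by tauto)

lemma jm_aux_summable {f : ℕ → ℝ} (hnn : ∀ x, 0 ≤ f x)
    (h : (∑' x, ENNReal.ofReal (f x)) ≠ ⊤) : Summable f :=
  (ENNReal.summable_toReal h).congr fun x => ENNReal.toReal_ofReal (hnn x)

lemma jm_aux_upward {P : ℕ → ℝ} (h0 : ∀ x, P x = 0 → pm1 P x = 0) :
    ∀ x, P x ≠ 0 → P (x + 1) ≠ 0 := by
  intro x hx h1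
  have := h0 (x + 1) h1
  simp [pm1] at this
  exact hx this

lemma jm_aux_pm1_summable {P : ℕ → ℝ} (hP : Summable P) : Summable (pm1 P) := by
  refine (summable_nat_add_iff 1).mp (hP.congr fun n => ?_)
  simp [pm1]

lemma jm_aux_pm1_tsum {P : ℕ → ℝ} (hP : Summable P) :
    ∑' x, pm1 P x = ∑' x, P x := by
  rw [Summable.tsum_eq_zero_add (jm_aux_pm1_summable hP)]
  simp [pm1]

/-- the score identity -/
lemma jm_aux_score {P : ℕ → ℝ} (h0 : ∀ x, P x = 0 → pm1 P x = 0) (x : ℕ) :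
    P x * (pm1 P x / P x - 1) = pm1 P x - P x := by
  by_cases hx : P x = 0
  · simp [hx, h0 x hx]
  · field_simp

/-- shift identity A -/
lemma jm_aux_A {P Q : ℕ → ℝ} (x : ℕ) :
    ∑ y ∈ Finset.range (x + 1), pm1 P y * Q (x - y) = pm1 (pmfConv P Q) x := by
  cases x with
  | zero => simp [pm1]
  | succ s =>
    rw [Finset.sum_range_succ']
    have : ∀ y, pm1 P (y + 1) * Q (s + 1 - (y + 1)) = P y * Q (s - y) := by
      intro y
      have h1 : s + 1 - (y + 1) = s - y := by omega
      simp [pm1, h1]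
    simp only [this]
    simp [pm1, pmfConv]

/-- shift identity B -/
lemma jm_aux_B {P Q : ℕ → ℝ} (x : ℕ) :
    ∑ y ∈ Finset.range (x + 1), P y * pm1 Q (x - y) = pm1 (pmfConv P Q) x := by
  cases x with
  | zero => simp [pm1]
  | succ s =>
    rw [Finset.sum_range_succ]
    have hz : pm1 Q (s + 1 - (s + 1)) = 0 := by simp [pm1]
    rw [hz]
    have : ∀ y ∈ Finset.range (s + 1), P y * pm1 Q (s + 1 - y) = P y * Q (s - y) := by
      intro y hy
      have hy' : y ≤ s := by simpa [Nat.lt_succ_iff] using hy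
      have h1 : s + 1 - y = (s - y) + 1 := by omega
      have h2 : (s - y) + 1 - 1 = s - y := by omega
      simp [pm1, h1, h2]
    rw [Finset.sum_congr rfl this]
    simp [pm1, pmfConv]
lemma jm_aux_pm1_nonneg {P : ℕ → ℝ} (hPn : ∀ x, 0 ≤ P x) (x : ℕ) : 0 ≤ pm1 P x := by
  unfold pm1; split <;> simp [hPn]

/-- the pointwise Cauchy–Schwarz step -/
lemma jm_aux_CS {P Q : ℕ → ℝ} (hPn : ∀ x, 0 ≤ P x) (hQn : ∀ x, 0 ≤ Q x)
    (hP0 : ∀ x, P x = 0 → pm1 P x = 0) (hQ0 : ∀ x, Q x = 0 → pm1 Q x = 0) (x : ℕ) :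
    pmfConv P Q x * (pm1 (pmfConv P Q) x / pmfConv P Q x - 1) ^ 2 ≤
      ∑ y ∈ Finset.range (x + 1), P y * Q (x - y) *
        (2⁻¹ * (pm1 P y / P y - 1) + 2⁻¹ * (pm1 Q (x - y) / Q (x - y) - 1)) ^ 2 := by
  have hRn : 0 ≤ pmfConv P Q x :=
    Finset.sum_nonneg fun y _ => mul_nonneg (hPn y) (hQn _)
  have hGnn : 0 ≤ ∑ y ∈ Finset.range (x + 1), P y * Q (x - y) *
      (2⁻¹ * (pm1 P y / P y - 1) + 2⁻¹ * (pm1 Q (x - y) / Q (x - y) - 1)) ^ 2 :=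
    Finset.sum_nonneg fun y _ =>
      mul_nonneg (mul_nonneg (hPn y) (hQn _)) (sq_nonneg _)
  rcases eq_or_lt_of_le hRn with h0 | hpos
  · rw [← h0, zero_mul]; exact hGnn
  · have hterm : ∀ y ∈ Finset.range (x + 1),
        P y * Q (x - y) * (2⁻¹ * (pm1 P y / P y - 1) + 2⁻¹ * (pm1 Q (x - y) / Q (x - y) - 1))
          = 2⁻¹ * (pm1 P y * Q (x - y)) + 2⁻¹ * (P y * pm1 Q (x - y)) - P y * Q (x - y) := by
      intro y _
      by_cases hp : P y = 0
      · simp [hp, hP0 y hp]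
      by_cases hq : Q (x - y) = 0
      · simp [hq, hQ0 _ hq]
      field_simp
      ring
    have hS : ∑ y ∈ Finset.range (x + 1),
        P y * Q (x - y) * (2⁻¹ * (pm1 P y / P y - 1) + 2⁻¹ * (pm1 Q (x - y) / Q (x - y) - 1))
          = pm1 (pmfConv P Q) x - pmfConv P Q x := by
      rw [Finset.sum_congr rfl hterm, Finset.sum_sub_distrib, Finset.sum_add_distrib,
        ← Finset.mul_sum, ← Finset.mul_sum, jm_aux_A, jm_aux_B]
      have : ∑ y ∈ Finset.range (x + 1), P y * Q (x - y) = pmfConv P Q x := rfl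
      rw [this]; ring
    have hCS := Finset.sum_sq_le_sum_mul_sum_of_sq_eq_mul (Finset.range (x + 1))
      (r := fun y => P y * Q (x - y) *
        (2⁻¹ * (pm1 P y / P y - 1) + 2⁻¹ * (pm1 Q (x - y) / Q (x - y) - 1)))
      (f := fun y => P y * Q (x - y))
      (g := fun y => P y * Q (x - y) *
        (2⁻¹ * (pm1 P y / P y - 1) + 2⁻¹ * (pm1 Q (x - y) / Q (x - y) - 1)) ^ 2)
      (fun y _ => mul_nonneg (hPn y) (hQn _))
      (fun y _ => mul_nonneg (mul_nonneg (hPn y) (hQn _)) (sq_nonneg _))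
      (fun y _ => by ring)
    rw [hS] at hCS
    have hW : ∑ y ∈ Finset.range (x + 1), P y * Q (x - y) = pmfConv P Q x := rfl
    rw [hW] at hCS
    have hkey : pmfConv P Q x * (pm1 (pmfConv P Q) x / pmfConv P Q x - 1) ^ 2
        = (pm1 (pmfConv P Q) x - pmfConv P Q x) ^ 2 / pmfConv P Q x := by
      field_simp
    rw [hkey, div_le_iff₀ hpos]
    linarith [hCS]

/-- subadditivity of the Johnstone–MacGibbon Fisher information
on convolution. -/
theorem jmFisher_subadditive (P Q : ℕ → ℝ)
    (hPnonneg : ∀ x, 0 ≤ P x) (hQnonneg : ∀ x, 0 ≤ Q x)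
    (hPpmf : ∑' x : ℕ, P x = 1) (hQpmf : ∑' x : ℕ, Q x = 1)
    (hPfin : jmFisher P ≠ ⊤) (hQfin : jmFisher Q ≠ ⊤) :
    jmFisher (pmfConv P Q) ≤ (jmFisher P + jmFisher Q) / 4 := by
  have hP0 := jm_aux_no_top hPfin
  have hQ0 := jm_aux_no_top hQfin
  have hPsum : Summable P := by
    by_contra h; rw [tsum_eq_zero_of_not_summable h] at hPpmf; norm_num at hPpmf
  have hQsum : Summable Q := by
    by_contra h; rw [tsum_eq_zero_of_not_summable h] at hQpmf; norm_num at hQpmf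
  -- the Fisher integrands
  set f1 : ℕ → ℝ := fun y => P y * (pm1 P y / P y - 1) ^ 2 with hf1def
  set f2 : ℕ → ℝ := fun y => Q y * (pm1 Q y / Q y - 1) ^ 2 with hf2def
  have hf1nn : ∀ y, 0 ≤ f1 y := fun y => mul_nonneg (hPnonneg y) (sq_nonneg _)
  have hf2nn : ∀ y, 0 ≤ f2 y := fun y => mul_nonneg (hQnonneg y) (sq_nonneg _)
  have hf1sum : Summable f1 := jm_aux_summable hf1nn (by rw [← jm_aux_eq hP0]; exact hPfin)
  have hf2sum : Summable f2 := jm_aux_summable hf2nn (by rw [← jm_aux_eq hQ0]; exact hQfin)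
  -- the score integrands
  set s1 : ℕ → ℝ := fun y => P y * (pm1 P y / P y - 1) with hs1def
  set s2 : ℕ → ℝ := fun y => Q y * (pm1 Q y / Q y - 1) with hs2def
  have hs1 : ∀ y, s1 y = pm1 P y - P y := jm_aux_score hP0
  have hs2 : ∀ y, s2 y = pm1 Q y - Q y := jm_aux_score hQ0
  have hs1sum : Summable s1 :=
    (((jm_aux_pm1_summable hPsum).sub hPsum).congr fun y => (hs1 y).symm)
  have hs2sum : Summable s2 :=
    (((jm_aux_pm1_summable hQsum).sub hQsum).congr fun y => (hs2 y).symm)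
  have hs1tsum : ∑' y, s1 y = 0 := by
    rw [tsum_congr hs1, Summable.tsum_sub (jm_aux_pm1_summable hPsum) hPsum, jm_aux_pm1_tsum hPsum]
    ring
  have hs2tsum : ∑' y, s2 y = 0 := by
    rw [tsum_congr hs2, Summable.tsum_sub (jm_aux_pm1_summable hQsum) hQsum, jm_aux_pm1_tsum hQsum]
    ring
  -- norm summabilities
  have hf1norm : Summable fun y => ‖f1 y‖ :=
    hf1sum.congr fun y => (Real.norm_of_nonneg (hf1nn y)).symm
  have hf2norm : Summable fun y => ‖f2 y‖ :=
    hf2sum.congr fun y => (Real.norm_of_nonneg (hf2nn y)).symm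
  have hPnorm : Summable fun y => ‖P y‖ :=
    hPsum.congr fun y => (Real.norm_of_nonneg (hPnonneg y)).symm
  have hQnorm : Summable fun y => ‖Q y‖ :=
    hQsum.congr fun y => (Real.norm_of_nonneg (hQnonneg y)).symm
  have hs1norm : Summable fun y => ‖s1 y‖ := by
    refine Summable.of_nonneg_of_le (fun y => norm_nonneg _) (fun y => ?_)
      ((jm_aux_pm1_summable hPsum).add hPsum)
    rw [hs1 y, Real.norm_eq_abs, abs_le]
    constructor <;> nlinarith [hPnonneg y, jm_aux_pm1_nonneg hPnonneg y]
  have hs2norm : Summable fun y => ‖s2 y‖ := by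
    refine Summable.of_nonneg_of_le (fun y => norm_nonneg _) (fun y => ?_)
      ((jm_aux_pm1_summable hQsum).add hQsum)
    rw [hs2 y, Real.norm_eq_abs, abs_le]
    constructor <;> nlinarith [hQnonneg y, jm_aux_pm1_nonneg hQnonneg y]
  -- the dominating sequence and its Cauchy-product pieces
  set G : ℕ → ℝ := fun x => ∑ y ∈ Finset.range (x + 1), P y * Q (x - y) *
      (2⁻¹ * (pm1 P y / P y - 1) + 2⁻¹ * (pm1 Q (x - y) / Q (x - y) - 1)) ^ 2 with hGdef
  set c1 : ℕ → ℝ := fun x => ∑ y ∈ Finset.range (x + 1), f1 y * Q (x - y) with hc1def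
  set c2 : ℕ → ℝ := fun x => ∑ y ∈ Finset.range (x + 1), P y * f2 (x - y) with hc2def
  set c3 : ℕ → ℝ := fun x => ∑ y ∈ Finset.range (x + 1), s1 y * s2 (x - y) with hc3def
  have hGsplit : ∀ x, G x = 4⁻¹ * c1 x + 4⁻¹ * c2 x + 2⁻¹ * c3 x := by
    intro x
    simp only [hGdef, hc1def, hc2def, hc3def, Finset.mul_sum, ← Finset.sum_add_distrib]
    refine Finset.sum_congr rfl fun y _ => ?_
    simp only [hf1def, hf2def, hs1def, hs2def]
    ring
  have hc1sum : Summable c1 :=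
    summable_sum_mul_range_of_summable_norm' hf1norm hf1sum hQnorm hQsum
  have hc2sum : Summable c2 :=
    summable_sum_mul_range_of_summable_norm' hPnorm hPsum hf2norm hf2sum
  have hc3sum : Summable c3 :=
    summable_sum_mul_range_of_summable_norm' hs1norm hs1sum hs2norm hs2sum
  have hc1tsum : (∑' n, f1 n) * (∑' n, Q n) = ∑' x, c1 x :=
    tsum_mul_tsum_eq_tsum_sum_range_of_summable_norm hf1norm hQnorm
  have hc2tsum : (∑' n, P n) * (∑' n, f2 n) = ∑' x, c2 x :=
    tsum_mul_tsum_eq_tsum_sum_range_of_summable_norm hPnorm hf2norm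
  have hc3tsum : (∑' n, s1 n) * (∑' n, s2 n) = ∑' x, c3 x :=
    tsum_mul_tsum_eq_tsum_sum_range_of_summable_norm hs1norm hs2norm
  have hGsum : Summable G :=
    ((((hc1sum.mul_left _).add (hc2sum.mul_left _)).add (hc3sum.mul_left _)).congr
      fun x => (hGsplit x).symm)
  set iP := ∑' n, f1 n with hiP
  set iQ := ∑' n, f2 n with hiQ
  have hGtsum : ∑' x, G x = (iP + iQ) / 4 := by
    rw [tsum_congr hGsplit,
      Summable.tsum_add ((hc1sum.mul_left _).add (hc2sum.mul_left _)) (hc3sum.mul_left _),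
      Summable.tsum_add (hc1sum.mul_left _) (hc2sum.mul_left _),
      tsum_mul_left, tsum_mul_left, tsum_mul_left,
      ← hc1tsum, ← hc2tsum, ← hc3tsum, hQpmf, hPpmf, hs1tsum, hs2tsum]
    ring
  -- zero-set of the convolution
  have hQup := jm_aux_upward hQ0
  have hR0 : ∀ x, pmfConv P Q x = 0 → pm1 (pmfConv P Q) x = 0 := by
    intro x hx
    cases x with
    | zero => simp [pm1]
    | succ s =>
      have hterms : ∀ y ∈ Finset.range (s + 2), P y * Q (s + 1 - y) = 0 := by
        have := (Finset.sum_eq_zero_iff_of_nonneg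
          (fun y _ => mul_nonneg (hPnonneg y) (hQnonneg _))).mp hx
        exact this
      have : pm1 (pmfConv P Q) (s + 1) = pmfConv P Q s := by simp [pm1]
      rw [this]
      refine Finset.sum_eq_zero fun y hy => ?_
      have hy' : y ≤ s := by simpa [Nat.lt_succ_iff] using hy
      by_cases hp : P y = 0
      · simp [hp]
      by_cases hq : Q (s - y) = 0
      · simp [hq]
      exfalso
      have h1 : s + 1 - y = (s - y) + 1 := by omega
      have h2 := hQup _ hq
      have h3 := hterms y (by simp; omega)
      rw [h1] at h3
      exact (mul_ne_zero hp h2) h3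
  -- final chain
  have hGnn : ∀ x, 0 ≤ G x := fun x => Finset.sum_nonneg fun y _ =>
    mul_nonneg (mul_nonneg (hPnonneg y) (hQnonneg _)) (sq_nonneg _)
  have hiPnn : 0 ≤ iP := tsum_nonneg hf1nn
  have hiQnn : 0 ≤ iQ := tsum_nonneg hf2nn
  rw [jm_aux_eq hR0, jm_aux_eq hP0, jm_aux_eq hQ0]
  calc ∑' x, ENNReal.ofReal (pmfConv P Q x * (pm1 (pmfConv P Q) x / pmfConv P Q x - 1) ^ 2)
      ≤ ∑' x, ENNReal.ofReal (G x) :=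
        ENNReal.tsum_le_tsum fun x =>
          ENNReal.ofReal_le_ofReal (jm_aux_CS hPnonneg hQnonneg hP0 hQ0 x)
    _ = ENNReal.ofReal ((iP + iQ) / 4) := by
        rw [← ENNReal.ofReal_tsum_of_nonneg hGnn hGsum, hGtsum]
    _ = (ENNReal.ofReal iP + ENNReal.ofReal iQ) / 4 := by
        rw [ENNReal.ofReal_div_of_pos (by norm_num), ENNReal.ofReal_add hiPnn hiQnn]
        norm_num
    _ = ((∑' x, ENNReal.ofReal (f1 x)) + ∑' x, ENNReal.ofReal (f2 x)) / 4 := by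
        rw [ENNReal.ofReal_tsum_of_nonneg hf1nn hf1sum,
          ENNReal.ofReal_tsum_of_nonneg hf2nn hf2sum]

end
end

section
/- Let P be a probability mass function with P(x) > 0 for every nonnegative integer x, and suppose P is c-log-concave for some c > 0, i.e. P(x)/P(x+1) − P(x−1)/P(x) ≥ c for all x ≥ 0 (with P(−1) = 0). Then P satisfies the Poincaré inequality Var_P(g) ≤ (1/c) Σ_{x≥0} P(x) (g(x+1) − g(x))² for all functions g for which both sides are finite. -/
noncomputable section
open scoped BigOperators ENNReal
open Real

namespace ClcAux
open Finset Filter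


lemma summable_abs_mul {f g : ℕ → ℝ} (hf : Summable fun x => f x ^ 2)
    (hg : Summable fun x => g x ^ 2) : Summable fun x => |f x * g x| := by
  refine Summable.of_nonneg_of_le (fun x => abs_nonneg _) (fun x => ?_)
    ((hf.add hg).mul_left (1/2))
  have : |f x * g x| = |f x| * |g x| := abs_mul _ _
  nlinarith [sq_abs (f x), sq_abs (g x), sq_nonneg (|f x| - |g x|), abs_nonneg (f x), abs_nonneg (g x)]

lemma tsum_abs_mul_le {f g : ℕ → ℝ} (hf : Summable fun x => f x ^ 2)
    (hg : Summable fun x => g x ^ 2) :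
    ∑' x, |f x * g x| ≤ Real.sqrt (∑' x, f x ^ 2) * Real.sqrt (∑' x, g x ^ 2) := by
  refine Summable.tsum_le_of_sum_range_le (summable_abs_mul hf hg) (fun n => ?_)
  calc ∑ i ∈ range n, |f i * g i| = ∑ i ∈ range n, |f i| * |g i| := by
        simp [abs_mul]
    _ ≤ Real.sqrt (∑ i ∈ range n, |f i| ^ 2) * Real.sqrt (∑ i ∈ range n, |g i| ^ 2) :=
        Real.sum_mul_le_sqrt_mul_sqrt _ _ _
    _ ≤ Real.sqrt (∑' x, f x ^ 2) * Real.sqrt (∑' x, g x ^ 2) := by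
        simp only [sq_abs]
        gcongr
        · exact Summable.sum_le_tsum _ (fun i _ => sq_nonneg _) hf
        · exact Summable.sum_le_tsum _ (fun i _ => sq_nonneg _) hg

variable {P : ℕ → ℝ} {c : ℝ}

lemma ratio_lb (hpos : ∀ x, 0 < P x) (hclc : CLogConcave P c) :
    ∀ x : ℕ, c * (x + 1) * P (x + 1) ≤ P x := by
  intro x
  induction x with
  | zero =>
    have h := hclc 0
    have h2 : pm1 P 0 / P 0 = 0 := by simp [pm1]
    rw [h2, sub_zero, le_div_iff₀ (hpos 1)] at h
    simpa using h
  | succ n ih =>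
    have h := hclc (n + 1)
    have hp : pm1 P (n+1) = P n := by simp [pm1]
    rw [hp] at h
    have p1 := hpos n; have p2 := hpos (n+1); have p3 := hpos (n+1+1)
    have hr : c * (n+1) ≤ P n / P (n+1) := by
      rw [le_div_iff₀ p2]; push_cast; linarith
    have h' : c + c * (n+1) ≤ P (n+1) / P (n+1+1) := by linarith
    rw [le_div_iff₀ p3] at h'
    push_cast
    nlinarith [h']

lemma ratio_lb' (hpos : ∀ x, 0 < P x) (hclc : CLogConcave P c) (hc : 0 < c) :
    ∀ x : ℕ, c * P (x + 1) ≤ P x := by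
  intro x
  have h := ratio_lb hpos hclc x
  have : c * P (x+1) ≤ c * ((x:ℝ)+1) * P (x+1) := by
    nlinarith [mul_nonneg (mul_nonneg hc.le (Nat.cast_nonneg (α := ℝ) x)) (hpos (x+1)).le]
  linarith

lemma fact_bound (hpos : ∀ x, 0 < P x) (hc : 0 < c) (hclc : CLogConcave P c) :
    ∀ N j : ℕ, P (N + 1 + j) ≤ P (N + 1) * (1/c) ^ j / (Nat.factorial j) := by
  intro N j
  induction j with
  | zero => simp [le_of_eq]
  | succ n ih =>
    have hr := ratio_lb hpos hclc (N + 1 + n)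
    have p1 := hpos (N+1+n); have p2 := hpos (N+1+n+1); have p0 := hpos (N+1)
    have hn1 : (0:ℝ) < (n:ℝ) + 1 := by positivity
    have step : c * ((n:ℝ) + 1) * P (N + 1 + n + 1) ≤ P (N + 1 + n) := by
      have hle : (n:ℝ) + 1 ≤ ((N + 1 + n : ℕ) : ℝ) + 1 := by push_cast; linarith [Nat.cast_nonneg (α := ℝ) N]
      nlinarith [hr]
    have key : P (N + 1 + (n+1)) ≤ P (N + 1 + n) / (c * ((n:ℝ)+1)) := by
      rw [le_div_iff₀ (by positivity)]
      have : N + 1 + (n + 1) = N + 1 + n + 1 := by omega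
      rw [this]; linarith
    calc P (N + 1 + (n+1)) ≤ P (N + 1 + n) / (c * ((n:ℝ)+1)) := key
      _ ≤ (P (N + 1) * (1/c) ^ n / (Nat.factorial n)) / (c * ((n:ℝ)+1)) := by
          gcongr
      _ = P (N + 1) * (1/c) ^ (n+1) / (Nat.factorial (n+1)) := by
          rw [Nat.factorial_succ]
          have hf : (0:ℝ) < Nat.factorial n := by positivity
          push_cast
          field_simp
          ring_nf
          rw [mul_inv_cancel₀ hc.ne', one_mul]

lemma key_ind (hpos : ∀ x, 0 < P x) (hc : 0 < c) (hclc : CLogConcave P c)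
    (h k : ℕ → ℝ) (hk0 : k 0 = -(P 0 * h 0))
    (hks : ∀ n, k (n+1) = k n - P (n+1) * h (n+1)) :
    ∀ N, c * ∑ x ∈ range (N+1), k x ^ 2 / P x + k N ^ 2 / P N
       ≤ (∑ x ∈ range (N+1), P x * h x ^ 2) + k N ^ 2 / P (N+1) := by
  intro N
  induction N with
  | zero =>
    simp only [zero_add, sum_range_one]
    have p0 := hpos 0; have p1 := hpos 1
    have e : P 0 * h 0 ^ 2 = k 0 ^ 2 / P 0 := by
      rw [hk0]; field_simp
    rw [e]
    have hcc : c * P 1 ≤ P 0 := by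
      have h := hclc 0
      have h2 : pm1 P 0 / P 0 = 0 := by simp [pm1]
      rw [h2, sub_zero, le_div_iff₀ p1] at h
      linarith
    have : c * (k 0 ^ 2 / P 0) ≤ k 0 ^ 2 / P 1 := by
      rw [mul_div_assoc', div_le_div_iff₀ p0 p1]
      nlinarith [sq_nonneg (k 0)]
    linarith
  | succ N ih =>
    rw [sum_range_succ (fun x => P x * h x ^ 2) (N+1), sum_range_succ (fun x => k x ^ 2 / P x) (N+1)]
    set a := k N with ha
    set b := k (N+1) with hb
    set p := P N with hp'
    set q := P (N+1) with hq'
    set s := P (N+2) with hs'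
    have pp : 0 < p := hpos N
    have qq : 0 < q := hpos (N+1)
    have ss : 0 < s := hpos (N+2)
    have eh : P (N+1) * h (N+1) ^ 2 = (a - b)^2 / q := by
      rw [hb, hks N, ← ha, ← hq']
      field_simp
      ring
    have hE : c ≤ q / s - p / q := by
      have h := hclc (N+1)
      have hp2 : pm1 P (N+1) = P N := by simp [pm1]
      rw [hp2] at h
      have : (N+1)+1 = N+2 := rfl
      rw [this] at h
      exact h
    have S1 : c * (b^2/q) ≤ b^2/s - b^2*p/q^2 := by
      have hmul := mul_le_mul_of_nonneg_right hE (show (0:ℝ) ≤ b^2/q by positivity)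
      have e3 : (q/s - p/q) * (b^2/q) = b^2/s - b^2*p/q^2 := by field_simp
      linarith [hmul, e3.symm.le]
    have T2 : 2*a*b/q ≤ a^2/p + b^2*p/q^2 := by
      have e1 : a^2/p + b^2*p/q^2 - 2*a*b/q = (a*q - b*p)^2/(p*q^2) := by
        field_simp; ring
      nlinarith [sq_nonneg (a*q - b*p), div_nonneg (sq_nonneg (a*q - b*p)) (by positivity : (0:ℝ) ≤ p*q^2), e1]
    have e2 : (a-b)^2/q = a^2/q - 2*a*b/q + b^2/q := by ring
    rw [eh]
    linarith [ih]

lemma abel_id (h k : ℕ → ℝ) (g : ℕ → ℝ)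
    (hgh : ∀ x, g (x+1) - g x = h (x+1) - h x)
    (hk0 : k 0 = -(P 0 * h 0))
    (hks : ∀ n, k (n+1) = k n - P (n+1) * h (n+1)) :
    ∀ N, ∑ y ∈ range (N+1), P y * h y ^ 2
       = (∑ y ∈ range N, (g (y+1) - g y) * k y) - h N * k N := by
  intro N
  induction N with
  | zero =>
    simp only [zero_add, sum_range_one, range_zero, sum_empty, hk0]
    ring
  | succ N ih =>
    rw [sum_range_succ (fun y => P y * h y ^ 2) (N+1),
        sum_range_succ (fun y => (g (y+1) - g y) * k y) N, ih, hgh N, hks N]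
    ring

end ClcAux

open ClcAux Finset Filter in
set_option maxHeartbeats 1000000 in
/-- a c-log-concave mass function with full support satisfies the
Poincaré inequality with constant 1/c. -/
theorem clc_poincare (P : ℕ → ℝ) (hpos : ∀ x, 0 < P x)
    (hpmf : ∑' x : ℕ, P x = 1) (c : ℝ) (hc : 0 < c) (hclc : CLogConcave P c)
    (g : ℕ → ℝ)
    (h1 : Summable (fun x : ℕ => P x * g x))
    (h2 : Summable (fun x : ℕ => P x * (g x - ∑' y : ℕ, P y * g y) ^ 2))
    (h3 : Summable (fun x : ℕ => P x * (g (x + 1) - g x) ^ 2)) :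
    pmfVar P g ≤ (1 / c) * ∑' x : ℕ, P x * (g (x + 1) - g x) ^ 2 := by
  classical
  have hPsum : Summable P := by
    by_contra hn
    rw [tsum_eq_zero_of_not_summable hn] at hpmf
    norm_num at hpmf
  set m := ∑' y : ℕ, P y * g y with hm
  set h : ℕ → ℝ := fun x => g x - m with hh
  have hhx : ∀ x, h x = g x - m := fun x => rfl
  have hPh : Summable (fun x => P x * h x) :=
    (h1.sub (hPsum.mul_right m)).congr (fun x => by rw [hhx]; ring)
  have hPh2 : Summable (fun x => P x * h x ^ 2) := h2.congr (fun x => by rw [hhx])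
  have hPh0 : (∑' x : ℕ, P x * h x) = 0 := by
    have e : ∀ x : ℕ, P x * h x = P x * g x - P x * m := fun x => by rw [hhx]; ring
    rw [tsum_congr e, Summable.tsum_sub h1 (hPsum.mul_right m), tsum_mul_right, hpmf, ← hm]
    ring
  set V := ∑' x : ℕ, P x * h x ^ 2 with hV
  have hV0 : 0 ≤ V := tsum_nonneg (fun x => mul_nonneg (hpos x).le (sq_nonneg _))
  have hVar : pmfVar P g = V := by
    rw [pmfVar, ← hm, hV]
  -- tail sequences
  set k : ℕ → ℝ := fun n => ∑' i : ℕ, P (i + (n+1)) * h (i + (n+1)) with hk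
  have hk_eq : ∀ n, k n = -∑ x ∈ range (n+1), P x * h x := by
    intro n
    have := Summable.sum_add_tsum_nat_add (f := fun x => P x * h x) (n+1) hPh
    rw [hPh0] at this
    rw [hk]
    linarith [this]
  have hk0 : k 0 = -(P 0 * h 0) := by rw [hk_eq 0, sum_range_one]
  have hks : ∀ n, k (n+1) = k n - P (n+1) * h (n+1) := by
    intro n
    rw [hk_eq n, hk_eq (n+1), sum_range_succ]
    ring
  set W : ℕ → ℝ := fun n => ∑' i : ℕ, P (i + (n+1)) * h (i + (n+1)) ^ 2 with hW
  have hWsummable : ∀ n : ℕ, Summable (fun i => P (i + (n+1)) * h (i + (n+1)) ^ 2) :=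
    fun n => (summable_nat_add_iff (n+1)).2 hPh2
  have hWnonneg : ∀ n, 0 ≤ W n := fun n => tsum_nonneg (fun i => mul_nonneg (hpos _).le (sq_nonneg _))
  have hWle : ∀ n, W n ≤ V := by
    intro n
    have := Summable.sum_add_tsum_nat_add (f := fun x => P x * h x ^ 2) (n+1) hPh2
    have h4 : 0 ≤ ∑ x ∈ range (n+1), P x * h x ^ 2 :=
      Finset.sum_nonneg (fun x _ => mul_nonneg (hpos x).le (sq_nonneg _))
    rw [hW, hV]
    simp only []
    linarith [this]
  have hWtend : Tendsto W atTop (nhds 0) := by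
    have t := (tendsto_sum_nat_add (fun x => P x * h x ^ 2)).comp
      (tendsto_add_atTop_nat 1)
    exact t
  -- tail bound for P
  set C := ∑' j : ℕ, (1/c) ^ j / (Nat.factorial j) with hC
  have hCsum : Summable (fun j : ℕ => (1/c) ^ j / (Nat.factorial j)) :=
    Real.summable_pow_div_factorial (1/c)
  have hC0 : 0 ≤ C := tsum_nonneg (fun j => by positivity)
  have hTP : ∀ n : ℕ, (∑' i : ℕ, P (i + (n+1))) ≤ C * P (n+1) := by
    intro n
    have hsum : Summable (fun i => P (i + (n+1))) := (summable_nat_add_iff (n+1)).2 hPsum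
    calc (∑' i : ℕ, P (i + (n+1))) ≤ ∑' i : ℕ, P (n+1) * ((1/c) ^ i / (Nat.factorial i)) := by
          refine Summable.tsum_le_tsum (fun i => ?_) hsum (hCsum.mul_left _)
          have := fact_bound hpos hc hclc n i
          have e : i + (n+1) = n + 1 + i := by omega
          rw [e]
          calc P (n+1+i) ≤ P (n+1) * (1/c)^i / (Nat.factorial i) := this
            _ = P (n+1) * ((1/c)^i / (Nat.factorial i)) := by ring
      _ = C * P (n+1) := by rw [tsum_mul_left, hC]; ring
  -- bound on k n ^ 2
  have hkW : ∀ n, k n ^ 2 ≤ C * P (n+1) * W n := by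
    intro n
    set a : ℕ → ℝ := fun i => Real.sqrt (P (i + (n+1))) with hadef
    set b : ℕ → ℝ := fun i => Real.sqrt (P (i + (n+1))) * h (i + (n+1)) with hbdef
    have ha2 : ∀ i, a i ^ 2 = P (i + (n+1)) := fun i => Real.sq_sqrt (hpos _).le
    have hb2 : ∀ i, b i ^ 2 = P (i + (n+1)) * h (i + (n+1)) ^ 2 := by
      intro i
      rw [hbdef]
      simp only [mul_pow]
      rw [Real.sq_sqrt (hpos _).le]
    have hab : ∀ i, a i * b i = P (i + (n+1)) * h (i + (n+1)) := by
      intro i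
      rw [hadef, hbdef]
      show Real.sqrt (P (i+(n+1))) * (Real.sqrt (P (i+(n+1))) * h (i+(n+1))) = _
      rw [← mul_assoc, Real.mul_self_sqrt (hpos _).le]
    have hasum : Summable (fun i => a i ^ 2) := by
      refine Summable.congr ((summable_nat_add_iff (n+1)).2 hPsum) (fun i => (ha2 i).symm)
    have hbsum : Summable (fun i => b i ^ 2) := by
      refine Summable.congr (hWsummable n) (fun i => (hb2 i).symm)
    have habsum : Summable (fun i => |P (i + (n+1)) * h (i + (n+1))|) :=
      (summable_abs_mul hasum hbsum).congr (fun i => congrArg abs (hab i))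
    have habs : |k n| ≤ Real.sqrt (∑' i, a i ^ 2) * Real.sqrt (∑' i, b i ^ 2) := by
      have h5 : |k n| ≤ ∑' i, |P (i + (n+1)) * h (i + (n+1))| := by
        rw [hk]
        exact norm_tsum_le_tsum_norm (f := fun i => P (i + (n+1)) * h (i + (n+1)))
            (habsum.congr (fun i => (Real.norm_eq_abs _).symm))
      have h6 : (∑' i, |P (i + (n+1)) * h (i + (n+1))|) = ∑' i, |a i * b i| :=
        tsum_congr (fun i => (congrArg abs (hab i)).symm)
      rw [h6] at h5
      exact h5.trans (tsum_abs_mul_le hasum hbsum)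
    have e1 : (∑' i, a i ^ 2) = ∑' i, P (i + (n+1)) := tsum_congr ha2
    have e2 : (∑' i, b i ^ 2) = W n := tsum_congr hb2
    rw [e1, e2] at habs
    have hTPn := hTP n
    have hTPnn : 0 ≤ ∑' i : ℕ, P (i + (n+1)) := tsum_nonneg (fun i => (hpos _).le)
    calc k n ^ 2 = |k n| ^ 2 := (sq_abs _).symm
      _ ≤ (Real.sqrt (∑' i : ℕ, P (i + (n+1))) * Real.sqrt (W n)) ^ 2 := by
          apply pow_le_pow_left₀ (abs_nonneg _) habs
      _ = (∑' i : ℕ, P (i + (n+1))) * W n := by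
          rw [mul_pow, Real.sq_sqrt hTPnn, Real.sq_sqrt (hWnonneg n)]
      _ ≤ C * P (n+1) * W n := by
          apply mul_le_mul_of_nonneg_right hTPn (hWnonneg n)
  -- summability of k^2/P
  have hkP : ∀ n, k n ^ 2 / P (n+1) ≤ C * W n := by
    intro n
    rw [div_le_iff₀ (hpos (n+1))]
    calc k n ^ 2 ≤ C * P (n+1) * W n := hkW n
      _ = C * W n * P (n+1) := by ring
  have hkey := key_ind hpos hc hclc h k hk0 hks
  have hpartial : ∀ M : ℕ, ∑ x ∈ range M, k x ^ 2 / P x ≤ (V + C * V)/c := by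
    intro M
    have hsub : ∑ x ∈ range M, k x ^ 2 / P x ≤ ∑ x ∈ range (M+1), k x ^ 2 / P x := by
      apply Finset.sum_le_sum_of_subset_of_nonneg (range_subset_range.2 (by omega))
      intro i _ _
      exact div_nonneg (sq_nonneg _) (hpos i).le
    have h6 := hkey M
    have h7 : ∑ x ∈ range (M+1), P x * h x ^ 2 ≤ V :=
      Summable.sum_le_tsum _ (fun i _ => mul_nonneg (hpos i).le (sq_nonneg _)) hPh2
    have h8 : k M ^ 2 / P (M+1) ≤ C * W M := hkP M
    have h9 : C * W M ≤ C * V := mul_le_mul_of_nonneg_left (hWle M) hC0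
    have h10 : 0 ≤ k M ^ 2 / P M := div_nonneg (sq_nonneg _) (hpos M).le
    rw [le_div_iff₀ hc]
    have h11 := mul_le_mul_of_nonneg_left hsub hc.le
    nlinarith [h6, h7, h8, h9, h10, h11]
  have hk2sum : Summable (fun x => k x ^ 2 / P x) :=
    summable_of_sum_range_le (fun n => div_nonneg (sq_nonneg _) (hpos n).le) hpartial
  set K2 := ∑' x : ℕ, k x ^ 2 / P x with hK2
  have hK2nonneg : 0 ≤ K2 := tsum_nonneg fun x => div_nonneg (sq_nonneg _) (hpos x).le
  have hcK2 : c * K2 ≤ V := by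
    have hseq : ∀ N : ℕ, c * ∑ x ∈ range (N+1), k x ^ 2 / P x ≤ V + C * W N := by
      intro N
      have h6 := hkey N
      have h7 : ∑ x ∈ range (N+1), P x * h x ^ 2 ≤ V :=
        Summable.sum_le_tsum _ (fun i _ => mul_nonneg (hpos i).le (sq_nonneg _)) hPh2
      have h8 : k N ^ 2 / P (N+1) ≤ C * W N := hkP N
      have h10 : 0 ≤ k N ^ 2 / P N := div_nonneg (sq_nonneg _) (hpos N).le
      linarith
    have t1 : Tendsto (fun N : ℕ => c * ∑ x ∈ range (N+1), k x ^ 2 / P x) atTop (nhds (c * K2)) := by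
      have := (hk2sum.hasSum.tendsto_sum_nat).comp (tendsto_add_atTop_nat 1)
      exact this.const_mul c
    have t2 : Tendsto (fun N : ℕ => V + C * W N) atTop (nhds (V + C * 0)) :=
      tendsto_const_nhds.add (hWtend.const_mul C)
    have := le_of_tendsto_of_tendsto' t1 t2 hseq
    simpa using this
  -- Cauchy-Schwarz setup
  set d : ℕ → ℝ := fun x => g (x+1) - g x with hd
  have hdx : ∀ x, d x = g (x+1) - g x := fun x => rfl
  have hd2 : Summable (fun x => P x * d x ^ 2) := h3.congr (fun x => by rw [hdx])
  set D := ∑' x : ℕ, P x * d x ^ 2 with hD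
  have hD0 : 0 ≤ D := tsum_nonneg fun x => mul_nonneg (hpos x).le (sq_nonneg _)
  have hDeq : D = ∑' x : ℕ, P x * (g (x+1) - g x) ^ 2 := tsum_congr (fun x => by rw [hdx])
  set f : ℕ → ℝ := fun x => Real.sqrt (P x) * d x with hfdef
  set gg : ℕ → ℝ := fun x => k x / Real.sqrt (P x) with hggdef
  have hf2 : ∀ x, f x ^ 2 = P x * d x ^ 2 := by
    intro x
    rw [hfdef]
    show (Real.sqrt (P x) * d x) ^ 2 = _
    rw [mul_pow, Real.sq_sqrt (hpos x).le]
  have hgg2 : ∀ x, gg x ^ 2 = k x ^ 2 / P x := by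
    intro x
    rw [hggdef]
    show (k x / Real.sqrt (P x)) ^ 2 = _
    rw [div_pow, Real.sq_sqrt (hpos x).le]
  have hfsum : Summable (fun x => f x ^ 2) := hd2.congr fun x => (hf2 x).symm
  have hggsum : Summable (fun x => gg x ^ 2) := hk2sum.congr fun x => (hgg2 x).symm
  have hfg : ∀ x, f x * gg x = d x * k x := by
    intro x
    rw [hfdef, hggdef]
    show Real.sqrt (P x) * d x * (k x / Real.sqrt (P x)) = _
    have hs : Real.sqrt (P x) ≠ 0 := ne_of_gt (Real.sqrt_pos.2 (hpos x))
    field_simp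
  have hdkabs_sum : Summable (fun x => |d x * k x|) :=
    (summable_abs_mul hfsum hggsum).congr (fun x => congrArg abs (hfg x))
  have hdksum : Summable (fun x => d x * k x) := summable_abs_iff.mp hdkabs_sum
  have habsCS : ∑' x : ℕ, |d x * k x| ≤ Real.sqrt D * Real.sqrt K2 := by
    have h14 := tsum_abs_mul_le hfsum hggsum
    have e1 : (∑' x : ℕ, |f x * gg x|) = ∑' x : ℕ, |d x * k x| :=
      tsum_congr (fun x => congrArg abs (hfg x))
    have e2 : (∑' x : ℕ, f x ^ 2) = D := by rw [hD]; exact tsum_congr hf2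
    have e3 : (∑' x : ℕ, gg x ^ 2) = K2 := by rw [hK2]; exact tsum_congr hgg2
    rw [e1, e2, e3] at h14
    exact h14
  -- Abel identity and limits
  have habel := abel_id (P := P) h k g (fun x => by rw [hhx, hhx]; ring) hk0 hks
  set A := ∑' x : ℕ, d x * k x with hA
  have tA : Tendsto (fun N : ℕ => ∑ y ∈ range N, d y * k y) atTop (nhds A) :=
    hdksum.hasSum.tendsto_sum_nat
  have tV : Tendsto (fun N : ℕ => ∑ y ∈ range (N+1), P y * h y ^ 2) atTop (nhds V) :=
    (hPh2.hasSum.tendsto_sum_nat).comp (tendsto_add_atTop_nat 1)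
  have thk : Tendsto (fun N : ℕ => h N * k N) atTop (nhds (A - V)) := by
    have e : (fun N : ℕ => h N * k N)
        = fun N => (∑ y ∈ range N, d y * k y) - ∑ y ∈ range (N+1), P y * h y ^ 2 := by
      funext N
      have hab := habel N
      have : ∀ y, (g (y+1) - g y) * k y = d y * k y := fun y => by rw [hdx]
      simp only [this] at hab
      linarith
    rw [e]
    exact tA.sub tV
  have thk0 : Tendsto (fun N : ℕ => h N * k N) atTop (nhds 0) := by
    have hb : ∀ N, |h N * k N| ≤ Real.sqrt ((C * V / c) * W N) := by
      intro N
      have h11 : P N * h N ^ 2 ≤ V :=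
        Summable.le_tsum hPh2 N (fun i _ => mul_nonneg (hpos i).le (sq_nonneg _))
      have h12 : k N ^ 2 ≤ C * P (N+1) * W N := hkW N
      have h13 : c * P (N+1) ≤ P N := ratio_lb' hpos hclc hc N
      have hsq2 : (h N * k N) ^ 2 ≤ (C * V / c) * W N := by
        have hN2 : h N ^ 2 ≤ V / P N := by
          rw [le_div_iff₀ (hpos N)]; nlinarith [h11]
        have step1 : (h N * k N) ^ 2 ≤ (V / P N) * (C * P (N+1) * W N) := by
          have hk2n : (0:ℝ) ≤ k N ^ 2 := sq_nonneg _
          have hVP : (0:ℝ) ≤ V / P N := div_nonneg hV0 (hpos N).le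
          calc (h N * k N) ^ 2 = h N ^ 2 * k N ^ 2 := by ring
            _ ≤ (V / P N) * (C * P (N+1) * W N) :=
              mul_le_mul hN2 h12 hk2n hVP
        have step2 : (V / P N) * (C * P (N+1) * W N) ≤ (C * V / c) * W N := by
          have e4 : (V / P N) * (C * P (N+1) * W N)
              = (C * V * W N) * (P (N+1) / P N) := by
            field_simp
          have e5 : (C * V / c) * W N = (C * V * W N) * (1 / c) := by ring
          rw [e4, e5]
          apply mul_le_mul_of_nonneg_left _ (mul_nonneg (mul_nonneg hC0 hV0) (hWnonneg N))
          rw [div_le_div_iff₀ (hpos N) hc]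
          linarith
        linarith
      calc |h N * k N| = Real.sqrt ((h N * k N) ^ 2) := (Real.sqrt_sq_eq_abs _).symm
        _ ≤ Real.sqrt ((C * V / c) * W N) := Real.sqrt_le_sqrt hsq2
    have tb : Tendsto (fun N : ℕ => Real.sqrt ((C * V / c) * W N)) atTop (nhds 0) := by
      have t3 : Tendsto (fun N : ℕ => (C * V / c) * W N) atTop (nhds ((C * V / c) * 0)) :=
        hWtend.const_mul _
      rw [mul_zero] at t3
      have t4 := (Real.continuous_sqrt.tendsto 0).comp t3
      simpa [Function.comp_def] using t4
    have habs0 : Tendsto (fun N : ℕ => |h N * k N|) atTop (nhds 0) :=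
      squeeze_zero (fun N => abs_nonneg _) hb tb
    have hneg : Tendsto (fun N : ℕ => -|h N * k N|) atTop (nhds 0) := by
      simpa using habs0.neg
    exact tendsto_of_tendsto_of_tendsto_of_le_of_le hneg habs0
      (fun N => neg_abs_le _) (fun N => le_abs_self _)
  have hAV : A - V = 0 := tendsto_nhds_unique thk thk0
  have hVA : V = A := by linarith
  have hA_le : A ≤ Real.sqrt D * Real.sqrt K2 := by
    have h14 : A ≤ ∑' x : ℕ, |d x * k x| :=
      Summable.tsum_le_tsum (fun x => le_abs_self _) hdksum hdkabs_sum
    exact h14.trans habsCS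
  have hsq : V ^ 2 ≤ D * K2 := by
    have hVle : V ≤ Real.sqrt D * Real.sqrt K2 := hVA ▸ hA_le
    have e6 : (Real.sqrt D * Real.sqrt K2) ^ 2 = D * K2 := by
      rw [mul_pow, Real.sq_sqrt hD0, Real.sq_sqrt hK2nonneg]
    nlinarith [hVle, hV0, Real.sqrt_nonneg D, Real.sqrt_nonneg K2]
  have hfinal : V ≤ (1/c) * D := by
    rcases eq_or_lt_of_le hV0 with hz | hVpos
    · rw [← hz]; positivity
    · have hK2V : K2 * c ≤ V := by linarith [hcK2]
      have h15 : V ^ 2 ≤ D * (V / c) := by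
        have : K2 ≤ V / c := by rw [le_div_iff₀ hc]; linarith
        exact hsq.trans (mul_le_mul_of_nonneg_left this hD0)
      have h16 : c * V ^ 2 ≤ D * V := by
        have := mul_le_mul_of_nonneg_left h15 hc.le
        calc c * V ^ 2 ≤ c * (D * (V / c)) := this
          _ = D * V := by field_simp
      have h17 : c * V ≤ D := by nlinarith [h16, hVpos, mul_pos hVpos hVpos]
      calc V = (1/c) * (c * V) := by field_simp
        _ ≤ (1/c) * D := mul_le_mul_of_nonneg_left h17 (by positivity)
  rw [hVar]
  exact hfinal

end
end
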